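/- arXiv:2409.06932 — 5 statements merged into one kernel-verified Lean document; each statement's English description precedes it below -/
import Mathlib

section
/- Let p and q be probability distributions on a finite group G such that |p(x) - 1/|G|| ≤ ε/|G| and |q(x) - 1/|G|| ≤ ε/|G| for all x ∈ G. Then their convolution p*q satisfies |p*q(x) - 1/|G|| ≤ ε²/|G| for all x ∈ G. -/
open scoped BigOperators

/-- Convolution of two functions on a finite group. -/
noncomputable def conv {G : Type*} [Group G] [Fintype G] (p q : G → ℝ) : G → ℝ :=
  fun x => ∑ y, p y * q (y⁻¹ * x)

/-- If `p` and `q` are ε-uniform distributions on a finite group `G`, then `p * q` is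
ε²-uniform. -/
theorem conv_eps_uniform {G : Type*} [Group G] [Fintype G] (p q : G → ℝ) (ε : ℝ)
    (hp0 : ∀ x, 0 ≤ p x) (hp1 : ∑ x, p x = 1)
    (hq0 : ∀ x, 0 ≤ q x) (hq1 : ∑ x, q x = 1)
    (hpu : ∀ x, |p x - 1 / Fintype.card G| ≤ ε / Fintype.card G)
    (hqu : ∀ x, |q x - 1 / Fintype.card G| ≤ ε / Fintype.card G) :
    ∀ x, |conv p q x - 1 / Fintype.card G| ≤ ε ^ 2 / Fintype.card G := by
  intro x
  have : Nonempty G := ⟨x⟩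
  set n : ℝ := (Fintype.card G : ℝ) with hn
  have hnpos : (0 : ℝ) < n := by positivity
  have hq1' : ∑ y, q (y⁻¹ * x) = 1 := by
    rw [← hq1]
    exact Fintype.sum_equiv ((Equiv.inv G).trans (Equiv.mulRight x)) _ _ (fun y => rfl)
  have key : conv p q x - 1 / n =
      ∑ y, (p y - 1 / n) * (q (y⁻¹ * x) - 1 / n) := by
    have : ∑ y, (p y - 1 / n) * (q (y⁻¹ * x) - 1 / n) =
        ∑ y, (p y * q (y⁻¹ * x) - p y * (1/n) - (1/n) * q (y⁻¹ * x) + 1/n * (1/n)) := by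
      apply Finset.sum_congr rfl; intro y _; ring
    rw [this]
    simp only [Finset.sum_add_distrib, Finset.sum_sub_distrib, ← Finset.mul_sum,
      ← Finset.sum_mul, hq1', hp1, Finset.sum_const, nsmul_eq_mul, Finset.card_univ, ← hn]
    field_simp [conv]
    unfold conv; ring
  rw [key]
  calc |∑ y, (p y - 1 / n) * (q (y⁻¹ * x) - 1 / n)|
      ≤ ∑ y, |(p y - 1 / n) * (q (y⁻¹ * x) - 1 / n)| := Finset.abs_sum_le_sum_abs _ _
    _ ≤ ∑ _y : G, (ε / n) * (ε / n) := by
        apply Finset.sum_le_sum; intro y _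
        rw [abs_mul]
        have h1 := hpu y
        have h2 := hqu (y⁻¹ * x)
        exact mul_le_mul h1 h2 (abs_nonneg _) (le_trans (abs_nonneg _) h1)
    _ = n * ((ε / n) * (ε / n)) := by rw [Finset.sum_const, nsmul_eq_mul]; simp [hn]
    _ = ε ^ 2 / n := by field_simp
end

section
/- Let p and q be probability distributions on H^m (H a finite group) that are (ε,k)-uniform, i.e., for every set of k coordinates the marginal distribution is ε-uniform. Then the coordinate-wise convolution p*q is (ε²,k)-uniform. -/
open scoped BigOperators Classical

/-- Marginal of a distribution on `H^m` on the `k` coordinates given by `S`. -/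
noncomputable def marginal {H : Type*} [Fintype H] {m k : ℕ}
    (p : (Fin m → H) → ℝ) (S : Fin k → Fin m) : (Fin k → H) → ℝ :=
  fun z => ∑ x : Fin m → H, if ∀ i, x (S i) = z i then p x else 0

/-- `p` is `(ε, k)`-uniform: every marginal on `k` coordinates is ε-uniform. -/
def EpsKUniform {H : Type*} [Fintype H] {m : ℕ} (p : (Fin m → H) → ℝ) (ε : ℝ) (k : ℕ) : Prop :=
  ∀ S : Fin k → Fin m, Function.Injective S →
    ∀ z : Fin k → H, |marginal p S z - 1 / (Fintype.card H : ℝ) ^ k| ≤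
      ε / (Fintype.card H : ℝ) ^ k

lemma marginal_conv {H : Type*} [Group H] [Fintype H] {m k : ℕ}
    (p q : (Fin m → H) → ℝ) (S : Fin k → Fin m) :
    marginal (conv p q) S = conv (marginal p S) (marginal q S) := by
  funext z
  simp only [marginal, conv]
  have L : ∀ x : Fin m → H, (if ∀ i, x (S i) = z i then ∑ y, p y * q (y⁻¹ * x) else 0)
      = ∑ y, if ∀ i, x (S i) = z i then p y * q (y⁻¹ * x) else 0 := by
    intro x; split <;> simp
  simp only [L]
  rw [Finset.sum_comm]
  have R : ∀ y : Fin m → H,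
      (∑ x : Fin m → H, if ∀ i, x (S i) = z i then p y * q (y⁻¹ * x) else 0)
      = p y * marginal q S (fun i => (y (S i))⁻¹ * z i) := by
    intro y
    rw [← Equiv.sum_comp (Equiv.mulLeft y)]
    simp only [Equiv.coe_mulLeft, Pi.mul_apply, inv_mul_cancel_left, marginal,
      Finset.mul_sum, mul_ite, mul_zero]
    apply Finset.sum_congr rfl
    intro x _
    congr 1
    simp [eq_inv_mul_iff_mul_eq]
  simp only [R]
  -- RHS
  have R2 : ∀ y : Fin m → H,
      (∑ w : Fin k → H, if ∀ i, y (S i) = w i then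
        p y * marginal q S (fun i => (w i)⁻¹ * z i) else 0)
      = p y * marginal q S (fun i => (y (S i))⁻¹ * z i) := by
    intro y
    rw [Finset.sum_eq_single (fun i => y (S i))]
    · simp
    · intro w _ hw
      rw [if_neg]
      intro h
      exact hw (funext fun i => (h i).symm)
    · simp
  simp only [Finset.sum_mul, Pi.mul_apply, Pi.inv_apply]
  rw [Finset.sum_comm]
  apply Finset.sum_congr rfl
  intro y _
  rw [← R2 y]
  apply Finset.sum_congr rfl
  intro w _
  simp only [ite_mul, zero_mul]
  congr 1

lemma marginal_sum {H : Type*} [Fintype H] {m k : ℕ}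
    (p : (Fin m → H) → ℝ) (hp1 : ∑ x, p x = 1) (S : Fin k → Fin m) :
    ∑ w : Fin k → H, marginal p S w = 1 := by
  simp only [marginal]
  rw [Finset.sum_comm]
  rw [← hp1]
  apply Finset.sum_congr rfl
  intro x _
  rw [Finset.sum_eq_single (fun i => x (S i))]
  · simp
  · intro w _ hw
    rw [if_neg]
    intro h
    exact hw (funext h).symm
  · simp

/-- The coordinate-wise convolution of two `(ε,k)`-uniform distributions on `H^m`
is `(ε², k)`-uniform. -/
theorem conv_epsK_uniform {H : Type*} [Group H] [Fintype H] {m k : ℕ} (ε : ℝ)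
    (p q : (Fin m → H) → ℝ)
    (hp0 : ∀ x, 0 ≤ p x) (hp1 : ∑ x, p x = 1)
    (hq0 : ∀ x, 0 ≤ q x) (hq1 : ∑ x, q x = 1)
    (hpu : EpsKUniform p ε k) (hqu : EpsKUniform q ε k) :
    EpsKUniform (conv p q) (ε ^ 2) k := by
  intro S hS z
  set c : ℝ := 1 / (Fintype.card H : ℝ) ^ k with hc
  have hN : (0:ℝ) < (Fintype.card H : ℝ) ^ k := by
    positivity
  set P := marginal p S with hP
  set Q := marginal q S with hQ
  have hPsum : ∑ w : Fin k → H, P w = 1 := marginal_sum p hp1 S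
  have hQsum : ∑ w : Fin k → H, Q w = 1 := marginal_sum q hq1 S
  have hQsum' : ∑ w : Fin k → H, Q (w⁻¹ * z) = 1 := by
    rw [← hQsum]
    exact Fintype.sum_equiv ((Equiv.inv _).trans (Equiv.mulRight z)) _ _ (fun w => rfl)
  have hcard : (Fintype.card (Fin k → H) : ℝ) = (Fintype.card H : ℝ) ^ k := by
    simp [Fintype.card_fun]
  have key : conv P Q z - c = ∑ w : Fin k → H, (P w - c) * (Q (w⁻¹ * z) - c) := by
    have : ∑ w : Fin k → H, (P w - c) * (Q (w⁻¹ * z) - c)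
        = conv P Q z - c * 1 - c * 1 + (Fintype.card (Fin k → H) : ℝ) * (c * c) := by
      simp only [sub_mul, mul_sub, conv, Finset.sum_sub_distrib]
      rw [← Finset.mul_sum, ← Finset.sum_mul, hQsum', hPsum, Finset.sum_const, nsmul_eq_mul,
        Finset.card_univ]
      ring
    rw [this, hcard, hc]
    field_simp
    ring
  rw [marginal_conv, ← hP, ← hQ, key]
  calc |∑ w : Fin k → H, (P w - c) * (Q (w⁻¹ * z) - c)|
      ≤ ∑ w : Fin k → H, |(P w - c) * (Q (w⁻¹ * z) - c)| := Finset.abs_sum_le_sum_abs _ _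
    _ ≤ ∑ w : Fin k → H, (ε / (Fintype.card H : ℝ) ^ k) * (ε / (Fintype.card H : ℝ) ^ k) := by
        apply Finset.sum_le_sum
        intro w _
        rw [abs_mul]
        exact mul_le_mul (hpu S hS w) (hqu S hS _) (abs_nonneg _)
          (le_trans (abs_nonneg _) (hpu S hS w))
    _ = ε ^ 2 / (Fintype.card H : ℝ) ^ k := by
        rw [Finset.sum_const, nsmul_eq_mul, ← hcard]
        rw [Finset.card_univ, hcard]
        field_simp
end

section
/- Let p be a probability distribution on H^m, H a finite group, such that the Fourier coefficient p̂(ρ) is the zero matrix for every irreducible representation ρ of H^m with 1 ≤ |ρ| ≤ k (number of non-trivial tensor factors). Then p is k-uniform: every k-coordinate marginal of p is exactly the uniform distribution on H^k. -/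
open scoped BigOperators Classical

/-- `ρ` is a unitary representation of `G`. -/
def IsUnitaryRep {G : Type*} [Group G] {n : Type*} [Fintype n] [DecidableEq n]
    (ρ : G → Matrix n n ℂ) : Prop :=
  (∀ x, ρ x ∈ Matrix.unitaryGroup n ℂ) ∧ (∀ x y, ρ (x * y) = ρ x * ρ y) ∧ ρ 1 = 1

/-- `ρ` is irreducible. -/
def IsIrredRep {G : Type*} [Group G] {n : Type*} [Fintype n]
    (ρ : G → Matrix n n ℂ) : Prop :=
  Nonempty n ∧ ∀ W : Submodule ℂ (n → ℂ),
    (∀ x, ∀ v ∈ W, (ρ x).mulVec v ∈ W) → W = ⊥ ∨ W = ⊤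

/-- Fourier coefficient `f̂(ρ) = (1/|G|) ∑ₓ f(x) conj(ρ(x))`. -/
noncomputable def repFourier {G : Type*} [Group G] [Fintype G] {n : Type*} [Fintype n]
    (f : G → ℂ) (ρ : G → Matrix n n ℂ) : Matrix n n ℂ :=
  (Fintype.card G : ℂ)⁻¹ • ∑ x, f x • (ρ x).map (starRingEnd ℂ)

/-- Tensor (Kronecker) product of a family of matrix-valued representations of `H`,
giving a representation of `H^m`. -/
noncomputable def tensorRep {H : Type*} {m : ℕ} {n : Fin m → ℕ}
    (ρ : ∀ t, H → Matrix (Fin (n t)) (Fin (n t)) ℂ) :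
    (Fin m → H) → Matrix (∀ t, Fin (n t)) (∀ t, Fin (n t)) ℂ :=
  fun x i j => ∏ t, ρ t (x t) (i t) (j t)

/-- The number of non-trivial factors of a tensor product representation. -/
noncomputable def suppSize {H : Type*} {m : ℕ} {n : Fin m → ℕ}
    (ρ : ∀ t, H → Matrix (Fin (n t)) (Fin (n t)) ℂ) : ℕ :=
  (Finset.univ.filter fun t => ∃ x, ρ t x ≠ 1).card

open scoped Matrix

namespace KU
variable {H : Type*} [Group H]

lemma matrix_eq_of_mulVec {n : Type*} [Fintype n] [DecidableEq n]
    (A B : Matrix n n ℂ) (h : ∀ v, A.mulVec v = B.mulVec v) : A = B := by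
  ext i j
  have := congrFun (h (Pi.single j 1)) i
  simpa using this

lemma IsUnitaryRep.star_eq {n : Type*} [Fintype n] [DecidableEq n]
    {ρ : H → Matrix n n ℂ} (h : IsUnitaryRep ρ) (x : H) : star (ρ x) = ρ x⁻¹ := by
  have h1 : ρ x⁻¹ * ρ x = 1 := by rw [← h.2.1, inv_mul_cancel, h.2.2]
  have h2 : star (ρ x) * ρ x = 1 := ((Unitary.mem_iff).mp (h.1 x)).1
  calc star (ρ x) = star (ρ x) * (ρ x * ρ x⁻¹) := by
        rw [mul_eq_one_comm.mp h1, Matrix.mul_one]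
    _ = (star (ρ x) * ρ x) * ρ x⁻¹ := by rw [Matrix.mul_assoc]
    _ = ρ x⁻¹ := by rw [h2, Matrix.one_mul]

/-- the trivial 1-dim rep -/
lemma trivialRep_unitary : IsUnitaryRep (fun _ : H => (1 : Matrix (Fin 1) (Fin 1) ℂ)) := by
  refine ⟨fun x => ?_, fun x y => by simp, rfl⟩
  simp [Unitary.mem_iff]

lemma trivialRep_irred : IsIrredRep (fun _ : H => (1 : Matrix (Fin 1) (Fin 1) ℂ)) := by
  refine ⟨⟨0⟩, fun W _ => ?_⟩
  haveI : IsSimpleOrder (Submodule ℂ (Fin 1 → ℂ)) :=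
    is_simple_module_of_finrank_eq_one (K := ℂ) (A := ℂ) (by simp [Module.finrank_pi])
  exact eq_bot_or_eq_top W

noncomputable def conjRep {n : Type*} (σ : H → Matrix n n ℂ) : H → Matrix n n ℂ :=
  fun x => (σ x).map (starRingEnd ℂ)

lemma conjRep_unitary {n : Type*} [Fintype n] [DecidableEq n]
    {σ : H → Matrix n n ℂ} (h : IsUnitaryRep σ) : IsUnitaryRep (conjRep σ) := by
  have hstar : ∀ M : Matrix n n ℂ, star (M.map (starRingEnd ℂ)) = (star M).map (starRingEnd ℂ) := by
    intro M; ext i j; simp [Matrix.conjTranspose_apply, Matrix.map_apply]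
  have hmul : ∀ M N : Matrix n n ℂ, (M * N).map (starRingEnd ℂ)
      = M.map (starRingEnd ℂ) * N.map (starRingEnd ℂ) := fun M N => Matrix.map_mul
  have hone : (1 : Matrix n n ℂ).map (starRingEnd ℂ) = 1 :=
    Matrix.map_one _ (map_zero _) (map_one _)
  refine ⟨fun x => ?_, fun x y => by simp only [conjRep]; rw [h.2.1, hmul], by
    simp only [conjRep, h.2.2, hone]⟩
  have h1 := (Unitary.mem_iff).mp (h.1 x)
  simp only [conjRep]
  rw [Unitary.mem_iff, hstar, ← hmul, ← hmul, h1.1, h1.2, hone]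
  exact ⟨rfl, rfl⟩

lemma conjRep_irred {n : Type*} [Fintype n]
    {σ : H → Matrix n n ℂ} (h : IsIrredRep σ) : IsIrredRep (conjRep σ) := by
  refine ⟨h.1, fun W hW => ?_⟩
  set W' : Submodule ℂ (n → ℂ) :=
    { carrier := {v | (fun i => (starRingEnd ℂ) (v i)) ∈ W}
      add_mem' := by
        intro a b ha hb
        have : (fun i => (starRingEnd ℂ) ((a + b) i))
            = (fun i => (starRingEnd ℂ) (a i)) + (fun i => (starRingEnd ℂ) (b i)) := by
          funext i; simp
        show (fun i => (starRingEnd ℂ) ((a + b) i)) ∈ W; rw [this]; exact W.add_mem ha hb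
      zero_mem' := by
        show (fun i => (starRingEnd ℂ) ((0 : n → ℂ) i)) ∈ W
        have : (fun i => (starRingEnd ℂ) ((0 : n → ℂ) i)) = (0 : n → ℂ) := by funext i; simp
        rw [this]; exact W.zero_mem
      smul_mem' := by
        intro c v hv
        have : (fun i => (starRingEnd ℂ) ((c • v) i))
            = (starRingEnd ℂ c) • (fun i => (starRingEnd ℂ) (v i)) := by
          funext i; simp [mul_comm]
        show (fun i => (starRingEnd ℂ) ((c • v) i)) ∈ W; rw [this]; exact W.smul_mem _ hv } with hW'def
  have hmem : ∀ v, v ∈ W' ↔ (fun i => (starRingEnd ℂ) (v i)) ∈ W := fun v => Iff.rfl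
  have hWinv : ∀ x, ∀ v ∈ W', (σ x).mulVec v ∈ W' := by
    intro x v hv
    rw [hmem] at hv ⊢
    have : (fun i => (starRingEnd ℂ) (((σ x).mulVec v) i))
        = (conjRep σ x).mulVec (fun i => (starRingEnd ℂ) (v i)) := by
      funext i
      simp [Matrix.mulVec, dotProduct, conjRep, Matrix.map_apply]
    rw [this]
    exact hW x _ hv
  rcases h.2 W' hWinv with hb | ht
  · left
    rw [Submodule.eq_bot_iff] at hb ⊢
    intro w hw
    have : (fun i => (starRingEnd ℂ) ((fun j => (starRingEnd ℂ) (w j)) i)) ∈ W := by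
      simpa using hw
    have := hb _ ((hmem _).mpr this)
    funext i
    have := congrFun this i
    simpa using congrArg (starRingEnd ℂ) this
  · right
    rw [Submodule.eq_top_iff'] at ht ⊢
    intro w
    have := (hmem _).mp (ht (fun i => (starRingEnd ℂ) (w i)))
    simpa using this

lemma sum_rep_eq_zero {n : Type*} [Fintype n] [DecidableEq n] [Fintype H]
    {σ : H → Matrix n n ℂ} (hu : IsUnitaryRep σ) (hi : IsIrredRep σ)
    (hnt : ∃ x, σ x ≠ 1) : ∑ y, σ y = 0 := by
  set P : Matrix n n ℂ := ∑ y, σ y with hP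
  have hfix : ∀ x, σ x * P = P := by
    intro x
    rw [hP, Finset.mul_sum]
    calc ∑ y, σ x * σ y = ∑ y, σ (x * y) := by
          exact Finset.sum_congr rfl fun y _ => (hu.2.1 x y).symm
      _ = ∑ y, σ y := Fintype.sum_equiv (Equiv.mulLeft x) _ _ (fun y => rfl)
  set V : Submodule ℂ (n → ℂ) :=
    { carrier := {v | ∀ x, (σ x).mulVec v = v}
      add_mem' := by intro a b ha hb x; rw [Matrix.mulVec_add, ha x, hb x]
      zero_mem' := by intro x; simp
      smul_mem' := by intro c v hv x; rw [Matrix.mulVec_smul, hv x] } with hV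
  have hVinv : ∀ x, ∀ v ∈ V, (σ x).mulVec v ∈ V := by
    intro x v hv; rw [hv x]; exact hv
  rcases hi.2 V hVinv with hb | ht
  · apply matrix_eq_of_mulVec
    intro v
    have hPv : P.mulVec v ∈ V := by
      intro x
      rw [Matrix.mulVec_mulVec, hfix x]
    have := (Submodule.eq_bot_iff V).mp hb _ hPv
    rw [this]
    simp
  · exfalso
    obtain ⟨x, hx⟩ := hnt
    apply hx
    apply matrix_eq_of_mulVec
    intro v
    have : v ∈ V := ht ▸ Submodule.mem_top
    rw [this x]
    simp

end KU

namespace KU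

lemma unitaryRep_star_eq {H : Type*} [Group H] {n : Type*} [Fintype n] [DecidableEq n]
    {ρ : H → Matrix n n ℂ} (h : IsUnitaryRep ρ) (x : H) : star (ρ x) = ρ x⁻¹ := by
  have h1 : ρ x⁻¹ * ρ x = 1 := by rw [← h.2.1, inv_mul_cancel, h.2.2]
  have h2 : star (ρ x) * ρ x = 1 := ((Unitary.mem_iff).mp (h.1 x)).1
  calc star (ρ x) = star (ρ x) * (ρ x * ρ x⁻¹) := by
        rw [mul_eq_one_comm.mp h1, Matrix.mul_one]
    _ = (star (ρ x) * ρ x) * ρ x⁻¹ := by rw [Matrix.mul_assoc]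
    _ = ρ x⁻¹ := by rw [h2, Matrix.one_mul]

lemma inner_c (a c : ℂ) : star a * c = inner ℂ a c := by
  rw [RCLike.inner_apply', starRingEnd_apply]

/-- column of a product -/
lemma mulcol {α β κ : Type*} [Fintype β] (A : Matrix α β ℂ) (M : Matrix β κ ℂ) (c : κ) :
    (fun i => (A * M) i c) = A.mulVec (fun r => M r c) := by
  funext i; simp [Matrix.mul_apply, Matrix.mulVec, dotProduct]

/-- basis matrix of an orthonormal family -/
noncomputable def obMatrix {ι : Type*} [Fintype ι] (K : Submodule ℂ (EuclideanSpace ℂ ι))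
    {s : ℕ} (b : OrthonormalBasis (Fin s) ℂ K) : Matrix ι (Fin s) ℂ :=
  Matrix.of fun i j => (b j : EuclideanSpace ℂ ι) i

lemma ortho_one {ι : Type*} [Fintype ι] (K : Submodule ℂ (EuclideanSpace ℂ ι))
    {s : ℕ} (b : OrthonormalBasis (Fin s) ℂ K) :
    (obMatrix K b)ᴴ * obMatrix K b = 1 := by
  ext j j'
  have h2 : (inner ℂ ((b j : EuclideanSpace ℂ ι)) ((b j' : EuclideanSpace ℂ ι)) : ℂ)
      = if j = j' then 1 else 0 := by
    rw [← Submodule.coe_inner]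
    exact orthonormal_iff_ite.mp b.orthonormal j j'
  rw [PiLp.inner_apply] at h2
  simp only [Matrix.mul_apply, Matrix.conjTranspose_apply, obMatrix, Matrix.of_apply,
    Matrix.one_apply, Matrix.star_apply, inner_c]
  exact h2

lemma ortho_kill {ι : Type*} [Fintype ι] (K : Submodule ℂ (EuclideanSpace ℂ ι))
    {s : ℕ} (b : OrthonormalBasis (Fin s) ℂ K) (v : EuclideanSpace ℂ ι) (hv : v ∈ Kᗮ) :
    (obMatrix K b)ᴴ.mulVec v = 0 := by
  funext j
  have h0 : (inner ℂ ((b j : EuclideanSpace ℂ ι)) v : ℂ) = 0 :=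
    (Submodule.mem_orthogonal K v).mp hv _ (Submodule.coe_mem (b j))
  rw [PiLp.inner_apply] at h0
  simp only [Matrix.mulVec, dotProduct, Matrix.conjTranspose_apply, obMatrix,
    Matrix.of_apply, Pi.zero_apply, Matrix.star_apply, inner_c]
  exact h0

lemma ortho_expand {ι : Type*} [Fintype ι] (K : Submodule ℂ (EuclideanSpace ℂ ι))
    {s : ℕ} (b : OrthonormalBasis (Fin s) ℂ K) (v : EuclideanSpace ℂ ι) (hv : v ∈ K) :
    (obMatrix K b * (obMatrix K b)ᴴ).mulVec v = v := by
  obtain ⟨w, rfl⟩ : ∃ w : K, (w : EuclideanSpace ℂ ι) = v := ⟨⟨v, hv⟩, rfl⟩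
  have hrep := congrArg (Subtype.val) (b.sum_repr' w)
  funext i
  have hco : ((w : EuclideanSpace ℂ ι)) i
      = ∑ j, (inner ℂ ((b j : EuclideanSpace ℂ ι)) ((w : EuclideanSpace ℂ ι)) : ℂ)
          * (b j : EuclideanSpace ℂ ι) i := by
    conv_lhs => rw [← hrep]
    rw [AddSubmonoidClass.coe_finset_sum]
    rw [WithLp.ofLp_sum, Finset.sum_apply]
    refine Finset.sum_congr rfl fun j _ => ?_
    rw [Submodule.coe_smul, Submodule.coe_inner]
    simp
  calc ((obMatrix K b * (obMatrix K b)ᴴ).mulVec ((w : EuclideanSpace ℂ ι))) i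
      = ∑ j, (inner ℂ ((b j : EuclideanSpace ℂ ι)) ((w : EuclideanSpace ℂ ι)) : ℂ)
          * (b j : EuclideanSpace ℂ ι) i := by
        simp only [Matrix.mulVec, dotProduct, Matrix.mul_apply,
          Matrix.conjTranspose_apply, obMatrix, Matrix.of_apply, Finset.sum_mul,
          Finset.mul_sum, PiLp.inner_apply, Matrix.star_apply]
        rw [Finset.sum_comm]
        refine Finset.sum_congr rfl fun j _ => Finset.sum_congr rfl fun i' _ => ?_
        rw [← inner_c]; ring
    _ = (w : EuclideanSpace ℂ ι) i := hco.symm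

end KU

namespace KU

lemma ortho_proj_mat {ι κ : Type*} [Fintype ι] [Fintype κ] (K : Submodule ℂ (EuclideanSpace ℂ ι))
    {s : ℕ} (b : OrthonormalBasis (Fin s) ℂ K) (M : Matrix ι κ ℂ)
    (hM : ∀ c, WithLp.toLp 2 (fun i => M i c) ∈ K) :
    (obMatrix K b * (obMatrix K b)ᴴ) * M = M := by
  ext i c
  have h1 : ((obMatrix K b * (obMatrix K b)ᴴ) * M) i c
      = ((obMatrix K b * (obMatrix K b)ᴴ).mulVec (fun r => M r c)) i :=
    congrFun (mulcol _ _ c) i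
  rw [h1, ortho_expand K b _ (hM c)]

lemma ortho_kill_mat {ι κ : Type*} [Fintype ι] [Fintype κ] (K : Submodule ℂ (EuclideanSpace ℂ ι))
    {s : ℕ} (b : OrthonormalBasis (Fin s) ℂ K) (M : Matrix ι κ ℂ)
    (hM : ∀ c, WithLp.toLp 2 (fun i => M i c) ∈ Kᗮ) :
    (obMatrix K b)ᴴ * M = 0 := by
  ext j c
  have h1 : ((obMatrix K b)ᴴ * M) j c = ((obMatrix K b)ᴴ.mulVec (fun r => M r c)) j :=
    congrFun (mulcol _ _ c) j
  rw [h1, ortho_kill K b _ (hM c)]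
  rfl

lemma ortho_sum {ι : Type*} [Fintype ι] [DecidableEq ι] (K : Submodule ℂ (EuclideanSpace ℂ ι))
    {s t : ℕ} (b1 : OrthonormalBasis (Fin s) ℂ K) (b2 : OrthonormalBasis (Fin t) ℂ ↥Kᗮ)
    (hcard : s + t = Fintype.card ι) :
    obMatrix K b1 * (obMatrix K b1)ᴴ + obMatrix Kᗮ b2 * (obMatrix Kᗮ b2)ᴴ = 1 := by
  classical
  set Bc : Matrix ι (Fin s ⊕ Fin t) ℂ :=
    Matrix.of fun i c => Sum.elim (fun j => obMatrix K b1 i j) (fun j => obMatrix Kᗮ b2 i j) c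
    with hBc
  have hBcBc : Bcᴴ * Bc = 1 := by
    ext c c'
    cases c with
    | inl j =>
      cases c' with
      | inl j' =>
        have h := congrFun (congrFun (ortho_one K b1) j) j'
        simp only [Matrix.mul_apply, Matrix.conjTranspose_apply, Matrix.one_apply] at h ⊢
        simpa [hBc, Matrix.of_apply, Sum.elim_inl, Sum.inl.injEq] using h
      | inr j' =>
        have h := congrFun (ortho_kill K b1 _ (Submodule.coe_mem (b2 j'))) j
        simp only [Matrix.mulVec, dotProduct, Matrix.conjTranspose_apply,
          Pi.zero_apply] at h
        simp only [Matrix.mul_apply, Matrix.conjTranspose_apply, Matrix.one_apply, hBc,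
          Matrix.of_apply, Sum.elim_inl, Sum.elim_inr]
        rw [if_neg (by simp)]
        exact h
    | inr j =>
      cases c' with
      | inl j' =>
        have h := congrFun (ortho_kill Kᗮ b2 _ (K.le_orthogonal_orthogonal
          (Submodule.coe_mem (b1 j')))) j
        simp only [Matrix.mulVec, dotProduct, Matrix.conjTranspose_apply,
          Pi.zero_apply] at h
        simp only [Matrix.mul_apply, Matrix.conjTranspose_apply, Matrix.one_apply, hBc,
          Matrix.of_apply, Sum.elim_inl, Sum.elim_inr]
        rw [if_neg (by simp)]
        exact h
      | inr j' =>
        have h := congrFun (congrFun (ortho_one Kᗮ b2) j) j'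
        simp only [Matrix.mul_apply, Matrix.conjTranspose_apply, Matrix.one_apply] at h ⊢
        simpa [hBc, Matrix.of_apply, Sum.elim_inr, Sum.inr.injEq] using h
  have hcc : Fintype.card (Fin s ⊕ Fin t) = Fintype.card ι := by simp [hcard]
  have h2 : Bc * Bcᴴ = 1 := (Matrix.mul_eq_one_comm_of_equiv (Fintype.equivOfCardEq hcc)).mp hBcBc
  ext i i'
  have h3 := congrFun (congrFun h2 i) i'
  simp only [Matrix.mul_apply, Matrix.conjTranspose_apply, Fintype.sum_sum_type, hBc,
    Matrix.of_apply, Sum.elim_inl, Sum.elim_inr] at h3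
  simp only [Matrix.add_apply, Matrix.mul_apply, Matrix.conjTranspose_apply]
  rw [← h3]

lemma sub_rep_unitary {H : Type*} [Group H] {ι : Type*} [Fintype ι] [DecidableEq ι] {s : ℕ}
    {ρ : H → Matrix ι ι ℂ} (hρ : IsUnitaryRep ρ) (B1 : Matrix ι (Fin s) ℂ)
    (hB1o : B1ᴴ * B1 = 1)
    (hP1 : ∀ x, (B1 * B1ᴴ) * (ρ x * B1) = ρ x * B1) :
    IsUnitaryRep (fun x => B1ᴴ * ρ x * B1) := by
  have hP1' : ∀ y, B1 * (B1ᴴ * (ρ y * B1)) = ρ y * B1 := fun y => by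
    have := hP1 y; rwa [Matrix.mul_assoc] at this
  have hmulp : ∀ x y, (B1ᴴ * ρ x * B1) * (B1ᴴ * ρ y * B1) = B1ᴴ * ρ (x * y) * B1 := by
    intro x y
    rw [hρ.2.1]
    simp only [Matrix.mul_assoc]
    rw [hP1']
  have hone : B1ᴴ * ρ 1 * B1 = 1 := by rw [hρ.2.2, Matrix.mul_one, hB1o]
  have hstar : ∀ x, star (B1ᴴ * ρ x * B1) = B1ᴴ * ρ x⁻¹ * B1 := by
    intro x
    have h1 : star (B1ᴴ * ρ x * B1) = B1ᴴ * (star (ρ x) * B1) := by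
      rw [show star (B1ᴴ * ρ x * B1) = (B1ᴴ * ρ x * B1)ᴴ from rfl,
        Matrix.conjTranspose_mul, Matrix.conjTranspose_mul, Matrix.conjTranspose_conjTranspose]
      rfl
    rw [h1, unitaryRep_star_eq hρ, Matrix.mul_assoc]
  refine ⟨fun x => ?_, fun x y => (hmulp x y).symm, hone⟩
  rw [Unitary.mem_iff]
  constructor
  · rw [hstar, hmulp, inv_mul_cancel, hone]
  · rw [hstar, hmulp, mul_inv_cancel, hone]

end KU

namespace KU

lemma split_eq {H : Type*} [Group H] {ι : Type*} [Fintype ι] [DecidableEq ι] {s t : ℕ}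
    {ρ : H → Matrix ι ι ℂ} (B1 : Matrix ι (Fin s) ℂ) (B2 : Matrix ι (Fin t) ℂ)
    (hsum : B1 * B1ᴴ + B2 * B2ᴴ = 1)
    (hP1 : ∀ x, (B1 * B1ᴴ) * (ρ x * B1) = ρ x * B1)
    (hP2 : ∀ x, (B2 * B2ᴴ) * (ρ x * B2) = ρ x * B2) :
    ∀ x, ρ x = B1 * (B1ᴴ * ρ x * B1) * B1ᴴ + B2 * (B2ᴴ * ρ x * B2) * B2ᴴ := by
  intro x
  have hP1' : B1 * (B1ᴴ * (ρ x * B1)) = ρ x * B1 := by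
    have := hP1 x; rwa [Matrix.mul_assoc] at this
  have hP2' : B2 * (B2ᴴ * (ρ x * B2)) = ρ x * B2 := by
    have := hP2 x; rwa [Matrix.mul_assoc] at this
  have h1 : B1 * (B1ᴴ * ρ x * B1) * B1ᴴ = (ρ x * B1) * B1ᴴ := by
    rw [← hP1']
    simp only [Matrix.mul_assoc]
  have h2 : B2 * (B2ᴴ * ρ x * B2) * B2ᴴ = (ρ x * B2) * B2ᴴ := by
    rw [← hP2']
    simp only [Matrix.mul_assoc]
  rw [h1, h2]
  calc ρ x = ρ x * 1 := (Matrix.mul_one _).symm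
    _ = ρ x * (B1 * B1ᴴ + B2 * B2ᴴ) := by rw [hsum]
    _ = ρ x * B1 * B1ᴴ + ρ x * B2 * B2ᴴ := by
        rw [Matrix.mul_add]
        simp only [Matrix.mul_assoc]

set_option maxHeartbeats 1000000 in
theorem decomp_rep {H : Type*} [Group H] :
    ∀ (N : ℕ) (ι : Type) [Fintype ι] [DecidableEq ι], Fintype.card ι ≤ N →
    ∀ (ρ : H → Matrix ι ι ℂ), IsUnitaryRep ρ →
    ∃ (J : ℕ) (d : Fin J → ℕ)
      (σ : ∀ j, H → Matrix (Fin (d j)) (Fin (d j)) ℂ)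
      (C : ∀ j, Matrix ι (Fin (d j)) ℂ) (D : ∀ j, Matrix (Fin (d j)) ι ℂ),
      (∀ j, IsUnitaryRep (σ j)) ∧ (∀ j, IsIrredRep (σ j)) ∧
      ∀ x, ρ x = ∑ j, C j * σ j x * D j := by
  intro N
  induction N with
  | zero =>
    intro ι _ _ hcard ρ hρ
    haveI : IsEmpty ι := Fintype.card_eq_zero_iff.mp (Nat.le_zero.mp hcard)
    exact ⟨0, fun j => (Nat.not_lt_zero _ j.2).elim, fun j => (Nat.not_lt_zero _ j.2).elim,
      fun j => (Nat.not_lt_zero _ j.2).elim, fun j => (Nat.not_lt_zero _ j.2).elim,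
      fun j => (Nat.not_lt_zero _ j.2).elim, fun j => (Nat.not_lt_zero _ j.2).elim,
      fun x => by ext i j; exact (IsEmpty.false i).elim⟩
  | succ N IH =>
    intro ι _ _ hcard ρ hρ
    by_cases hE : Fintype.card ι = 0
    · haveI : IsEmpty ι := Fintype.card_eq_zero_iff.mp hE
      exact ⟨0, fun j => (Nat.not_lt_zero _ j.2).elim, fun j => (Nat.not_lt_zero _ j.2).elim,
        fun j => (Nat.not_lt_zero _ j.2).elim, fun j => (Nat.not_lt_zero _ j.2).elim,
        fun j => (Nat.not_lt_zero _ j.2).elim, fun j => (Nat.not_lt_zero _ j.2).elim,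
        fun x => by ext i j; exact (IsEmpty.false i).elim⟩
    have hne : Nonempty ι := Fintype.card_pos_iff.mp (Nat.pos_of_ne_zero hE)
    by_cases hirr : IsIrredRep ρ
    · -- irreducible case: reindex to Fin (card ι)
      set e := Fintype.equivFin ι with he
      set σ0 : H → Matrix (Fin (Fintype.card ι)) (Fin (Fintype.card ι)) ℂ :=
        fun x => (ρ x).submatrix ⇑e.symm ⇑e.symm with hσ0
      have hsm : ∀ M L : Matrix ι ι ℂ,
          M.submatrix ⇑e.symm ⇑e.symm * L.submatrix ⇑e.symm ⇑e.symm
            = (M * L).submatrix ⇑e.symm ⇑e.symm := fun M L =>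
        Matrix.submatrix_mul_equiv M L ⇑e.symm e.symm ⇑e.symm
      have hu : IsUnitaryRep σ0 := by
        refine ⟨fun x => ?_, fun x y => by rw [hσ0]; simp only; rw [hρ.2.1, ← hsm], by
          rw [hσ0]; simp only; rw [hρ.2.2, Matrix.submatrix_one_equiv]⟩
        have h1 := (Unitary.mem_iff).mp (hρ.1 x)
        rw [Unitary.mem_iff, hσ0]
        simp only
        constructor
        · rw [show star ((ρ x).submatrix ⇑e.symm ⇑e.symm)
              = (star (ρ x)).submatrix ⇑e.symm ⇑e.symm from rfl, hsm, h1.1,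
            Matrix.submatrix_one_equiv]
        · rw [show star ((ρ x).submatrix ⇑e.symm ⇑e.symm)
              = (star (ρ x)).submatrix ⇑e.symm ⇑e.symm from rfl, hsm, h1.2,
            Matrix.submatrix_one_equiv]
      have hi : IsIrredRep σ0 := by
        refine ⟨⟨⟨0, Nat.pos_of_ne_zero hE⟩⟩, fun W' hW' => ?_⟩
        let ℓ : (ι → ℂ) →ₗ[ℂ] (Fin (Fintype.card ι) → ℂ) :=
          { toFun := fun v => v ∘ ⇑e.symm, map_add' := fun _ _ => rfl,
            map_smul' := fun _ _ => rfl }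
        have hml : ∀ (x : H) (v : ι → ℂ), (ρ x).mulVec v ∘ ⇑e.symm
            = (σ0 x).mulVec (v ∘ ⇑e.symm) := by
          intro x v
          rw [hσ0]
          simp only
          rw [Matrix.submatrix_mulVec_equiv]
          have h3 : (v ∘ ⇑e.symm) ∘ ⇑e.symm.symm = v := by funext r; simp
          rw [h3]
        rcases hirr.2 (W'.comap ℓ) (fun x v hv => by
            show (ρ x).mulVec v ∘ ⇑e.symm ∈ W'
            rw [hml]
            exact hW' x _ hv) with hb | ht
        · left
          rw [Submodule.eq_bot_iff] at hb ⊢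
          intro w hw
          have hwc : (w ∘ ⇑e) ∈ W'.comap ℓ := by
            show (w ∘ ⇑e) ∘ ⇑e.symm ∈ W'
            have h3 : (w ∘ ⇑e) ∘ ⇑e.symm = w := by funext i; simp
            rw [h3]; exact hw
          have h4 := hb _ hwc
          funext j
          have h5 := congrFun h4 (e.symm j)
          simpa using h5
        · right
          rw [Submodule.eq_top_iff'] at ht ⊢
          intro w
          have h2 : (w ∘ ⇑e) ∘ ⇑e.symm ∈ W' := ht (w ∘ ⇑e)
          have h3 : (w ∘ ⇑e) ∘ ⇑e.symm = w := by funext i; simp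
          rwa [h3] at h2
      have heq : ∀ x, ρ x = (1 : Matrix ι ι ℂ).submatrix id ⇑e.symm * σ0 x
          * (1 : Matrix ι ι ℂ).submatrix ⇑e.symm id := by
        intro x
        rw [hσ0]
        simp only
        rw [Matrix.submatrix_mul_equiv (1 : Matrix ι ι ℂ) (ρ x) id e.symm ⇑e.symm,
          Matrix.submatrix_mul_equiv _ (1 : Matrix ι ι ℂ) id e.symm id]
        simp
      exact ⟨1, fun _ => Fintype.card ι, fun _ => σ0,
        fun _ => (1 : Matrix ι ι ℂ).submatrix id ⇑e.symm,
        fun _ => (1 : Matrix ι ι ℂ).submatrix ⇑e.symm id,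
        fun _ => hu, fun _ => hi, fun x => by rw [Fin.sum_univ_one]; exact heq x⟩
    · -- reducible case
      obtain ⟨W, hWinv, hWbot, hWtop⟩ : ∃ W : Submodule ℂ (ι → ℂ),
          (∀ x, ∀ v ∈ W, (ρ x).mulVec v ∈ W) ∧ W ≠ ⊥ ∧ W ≠ ⊤ := by
        have h1 : ¬ ∀ W : Submodule ℂ (ι → ℂ),
            (∀ x, ∀ v ∈ W, (ρ x).mulVec v ∈ W) → W = ⊥ ∨ W = ⊤ :=
          fun h => hirr ⟨hne, h⟩
        push_neg at h1
        obtain ⟨W, hW1, hW2⟩ := h1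
        exact ⟨W, hW1, hW2⟩
      let WE : Submodule ℂ (EuclideanSpace ℂ ι) := W.comap ((WithLp.linearEquiv 2 ℂ (ι → ℂ)).toLinearMap : EuclideanSpace ℂ ι →ₗ[ℂ] ι → ℂ)
      have hWEinv : ∀ x, ∀ v ∈ WE, WithLp.toLp 2 ((ρ x).mulVec v) ∈ WE := fun x v hv => hWinv x _ hv
      have hinner : ∀ (A : Matrix ι ι ℂ) (v w : EuclideanSpace ℂ ι),
          (@inner ℂ (EuclideanSpace ℂ ι) _ v (WithLp.toLp 2 (A.mulVec w)))
            = @inner ℂ (EuclideanSpace ℂ ι) _ (WithLp.toLp 2 ((star A).mulVec v)) w := by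
        intro A v w
        rw [PiLp.inner_apply, PiLp.inner_apply]
        simp only [RCLike.inner_apply, Matrix.mulVec, dotProduct, Matrix.star_apply,
          map_sum, map_mul, Finset.mul_sum, Finset.sum_mul, starRingEnd_apply, star_star,
          star_sum, star_mul']
        rw [Finset.sum_comm]
        exact Finset.sum_congr rfl fun i _ => Finset.sum_congr rfl fun j _ => by ring
      have hWcinv : ∀ x, ∀ v ∈ WEᗮ, WithLp.toLp 2 ((ρ x).mulVec v) ∈ WEᗮ := by
        intro x v hv
        rw [Submodule.mem_orthogonal] at hv
        refine (Submodule.mem_orthogonal WE (WithLp.toLp 2 ((ρ x).mulVec v))).mpr ?_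
        intro u hu
        rw [hinner, unitaryRep_star_eq hρ]
        exact hv _ (hWEinv x⁻¹ u hu)
      have hWEbot : WE ≠ ⊥ := by
        intro h
        apply hWbot
        rw [Submodule.eq_bot_iff]
        intro v hv
        have h2 : WithLp.toLp 2 v ∈ (⊥ : Submodule ℂ (EuclideanSpace ℂ ι)) := h ▸ hv
        simpa using h2
      have hWEtop : WE ≠ ⊤ := by
        intro h
        apply hWtop
        rw [Submodule.eq_top_iff']
        intro v
        show WithLp.toLp 2 v ∈ WE
        rw [h]; trivial
      have hd12 : Module.finrank ℂ WE + Module.finrank ℂ ↥WEᗮ = Fintype.card ι := by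
        rw [Submodule.finrank_add_finrank_orthogonal, finrank_euclideanSpace]
      have hd1pos : 0 < Module.finrank ℂ WE :=
        Nat.pos_of_ne_zero fun h => hWEbot (Submodule.finrank_eq_zero.mp h)
      have hd2pos : 0 < Module.finrank ℂ ↥WEᗮ :=
        Nat.pos_of_ne_zero fun h =>
          hWEtop (Submodule.orthogonal_eq_bot_iff.mp (Submodule.finrank_eq_zero.mp h))
      set b1 := stdOrthonormalBasis ℂ ↥WE with hb1
      set b2 := stdOrthonormalBasis ℂ ↥WEᗮ with hb2
      have hcolmem1 : ∀ (x : H) (j), WithLp.toLp 2 (fun i => (ρ x * obMatrix WE b1) i j) ∈ WE := by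
        intro x j
        rw [mulcol]
        exact hWEinv x _ (Submodule.coe_mem (b1 j))
      have hcolmem2 : ∀ (x : H) (j), WithLp.toLp 2 (fun i => (ρ x * obMatrix WEᗮ b2) i j) ∈ WEᗮ := by
        intro x j
        rw [mulcol]
        exact hWcinv x _ (Submodule.coe_mem (b2 j))
      have hP1 : ∀ x, (obMatrix WE b1 * (obMatrix WE b1)ᴴ) * (ρ x * obMatrix WE b1)
          = ρ x * obMatrix WE b1 := fun x => ortho_proj_mat WE b1 _ (hcolmem1 x)
      have hP2 : ∀ x, (obMatrix WEᗮ b2 * (obMatrix WEᗮ b2)ᴴ) * (ρ x * obMatrix WEᗮ b2)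
          = ρ x * obMatrix WEᗮ b2 := fun x => ortho_proj_mat WEᗮ b2 _ (hcolmem2 x)
      have hsum := ortho_sum WE b1 b2 hd12
      have hu1 := sub_rep_unitary hρ (obMatrix WE b1) (ortho_one WE b1) hP1
      have hu2 := sub_rep_unitary hρ (obMatrix WEᗮ b2) (ortho_one WEᗮ b2) hP2
      have hdec := split_eq (obMatrix WE b1) (obMatrix WEᗮ b2) hsum hP1 hP2
      obtain ⟨J1, dd1, σ1, C1, D1, hJ1u, hJ1i, hJ1s⟩ :=
        IH (Fin (Module.finrank ℂ WE)) (by rw [Fintype.card_fin]; omega) _ hu1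
      obtain ⟨J2, dd2, σ2, C2, D2, hJ2u, hJ2i, hJ2s⟩ :=
        IH (Fin (Module.finrank ℂ ↥WEᗮ)) (by rw [Fintype.card_fin]; omega) _ hu2
      set Fd : Fin J1 ⊕ Fin J2 → ℕ := Sum.elim dd1 dd2 with hFd
      set Fσ : ∀ s0 : Fin J1 ⊕ Fin J2, H → Matrix (Fin (Fd s0)) (Fin (Fd s0)) ℂ :=
        fun s0 => Sum.rec (motive := fun s0 => H → Matrix (Fin (Fd s0)) (Fin (Fd s0)) ℂ)
          σ1 σ2 s0 with hFσ
      set FC : ∀ s0 : Fin J1 ⊕ Fin J2, Matrix ι (Fin (Fd s0)) ℂ :=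
        fun s0 => Sum.rec (motive := fun s0 => Matrix ι (Fin (Fd s0)) ℂ)
          (fun a => obMatrix WE b1 * C1 a) (fun b => obMatrix WEᗮ b2 * C2 b) s0 with hFC
      set FD : ∀ s0 : Fin J1 ⊕ Fin J2, Matrix (Fin (Fd s0)) ι ℂ :=
        fun s0 => Sum.rec (motive := fun s0 => Matrix (Fin (Fd s0)) ι ℂ)
          (fun a => D1 a * (obMatrix WE b1)ᴴ) (fun b => D2 b * (obMatrix WEᗮ b2)ᴴ) s0 with hFD
      refine ⟨J1 + J2, fun j => Fd (finSumFinEquiv.symm j),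
        fun j => Fσ (finSumFinEquiv.symm j), fun j => FC (finSumFinEquiv.symm j),
        fun j => FD (finSumFinEquiv.symm j), ?_, ?_, ?_⟩
      · intro j
        show IsUnitaryRep (Fσ (finSumFinEquiv.symm j))
        generalize finSumFinEquiv.symm j = s0
        cases s0 with
        | inl a => exact hJ1u a
        | inr b => exact hJ2u b
      · intro j
        show IsIrredRep (Fσ (finSumFinEquiv.symm j))
        generalize finSumFinEquiv.symm j = s0
        cases s0 with
        | inl a => exact hJ1i a
        | inr b => exact hJ2i b
      · intro x
        show ρ x = ∑ j : Fin (J1 + J2), FC (finSumFinEquiv.symm j)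
          * Fσ (finSumFinEquiv.symm j) x * FD (finSumFinEquiv.symm j)
        rw [Equiv.sum_comp finSumFinEquiv.symm (fun s0 => FC s0 * Fσ s0 x * FD s0),
          Fintype.sum_sum_type]
        have hred1 : ∑ a : Fin J1, FC (Sum.inl a) * Fσ (Sum.inl a) x * FD (Sum.inl a)
            = ∑ a : Fin J1, (obMatrix WE b1 * C1 a) * σ1 a x
              * (D1 a * (obMatrix WE b1)ᴴ) := Finset.sum_congr rfl fun a _ => rfl
        have hred2 : ∑ b : Fin J2, FC (Sum.inr b) * Fσ (Sum.inr b) x * FD (Sum.inr b)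
            = ∑ b : Fin J2, (obMatrix WEᗮ b2 * C2 b) * σ2 b x
              * (D2 b * (obMatrix WEᗮ b2)ᴴ) := Finset.sum_congr rfl fun b _ => rfl
        have hdx := hdec x
        rw [hJ1s x, hJ2s x] at hdx
        rw [hred1, hred2, hdx]
        congr 1
        · rw [Matrix.mul_sum, Matrix.sum_mul]
          exact Finset.sum_congr rfl fun a _ => by simp only [Matrix.mul_assoc]
        · rw [Matrix.mul_sum, Matrix.sum_mul]
          exact Finset.sum_congr rfl fun b _ => by simp only [Matrix.mul_assoc]

end KU
namespace KU

/-- entry formula for Fourier coefficients of tensor representations -/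
lemma repFourier_entry {H : Type*} [Group H] [Fintype H] {m : ℕ}
    (f : (Fin m → H) → ℂ) {nn : Fin m → ℕ}
    (ρ : ∀ t, H → Matrix (Fin (nn t)) (Fin (nn t)) ℂ) (a b : ∀ t, Fin (nn t)) :
    (repFourier f (tensorRep ρ)) a b
      = (Fintype.card (Fin m → H) : ℂ)⁻¹
        * ∑ x, f x * (starRingEnd ℂ) (∏ t, ρ t (x t) (a t) (b t)) := by
  simp only [repFourier, tensorRep, Matrix.smul_apply, Matrix.sum_apply,
    Matrix.map_apply, smul_eq_mul]

lemma triple_mul_apply {α β γ δ : Type*} [Fintype β] [Fintype γ]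
    (M : Matrix α β ℂ) (N : Matrix β γ ℂ) (P : Matrix γ δ ℂ) (a : α) (b : δ) :
    (M * N * P) a b = ∑ u, ∑ v, M a u * N u v * P v b := by
  simp only [Matrix.mul_apply, Finset.sum_mul]
  rw [Finset.sum_comm]

/-- sum over functions of a product equals product of sums -/
lemma exch {m : ℕ} {H : Type*} [Fintype H] (f : Fin m → H → ℂ) :
    ∑ x : Fin m → H, ∏ t, f t (x t) = ∏ t, ∑ y, f t y := by
  rw [Finset.prod_univ_sum]
  rw [Fintype.piFinset_univ]

end KU
namespace KU

/-- The central vanishing lemma for `g = p - uniform`. -/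
lemma fourier_g_vanish {H : Type*} [Group H] [Fintype H] {m k : ℕ}
    (p : (Fin m → H) → ℝ) (hp1 : ∑ x, p x = 1)
    (hvanish : ∀ (n : Fin m → ℕ) (ρ : ∀ t, H → Matrix (Fin (n t)) (Fin (n t)) ℂ),
      (∀ t, IsUnitaryRep (ρ t)) → (∀ t, IsIrredRep (ρ t)) →
      1 ≤ suppSize ρ → suppSize ρ ≤ k →
      repFourier (fun x => (p x : ℂ)) (tensorRep ρ) = 0)
    (nn : Fin m → ℕ) (ρ : ∀ t, H → Matrix (Fin (nn t)) (Fin (nn t)) ℂ)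
    (hu : ∀ t, IsUnitaryRep (ρ t)) (hi : ∀ t, IsIrredRep (ρ t))
    (hsupp : suppSize ρ ≤ k) :
    repFourier (fun x => (p x : ℂ) - ((Fintype.card H : ℂ))⁻¹ ^ m) (tensorRep ρ) = 0 := by
  have hc0 : (Fintype.card H : ℂ) ≠ 0 := Nat.cast_ne_zero.mpr Fintype.card_ne_zero
  have hcard : (Fintype.card (Fin m → H) : ℂ) = (Fintype.card H : ℂ) ^ m := by
    rw [Fintype.card_fun]
    push_cast
    simp
  have hgsum : ∑ x : Fin m → H, ((p x : ℂ) - ((Fintype.card H : ℂ))⁻¹ ^ m) = 0 := by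
    rw [Finset.sum_sub_distrib]
    have h1 : ∑ x : Fin m → H, ((p x : ℝ) : ℂ) = 1 := by
      rw [← Complex.ofReal_sum, hp1, Complex.ofReal_one]
    have h2 : ∑ _x : Fin m → H, ((Fintype.card H : ℂ))⁻¹ ^ m = 1 := by
      rw [Finset.sum_const, Finset.card_univ, nsmul_eq_mul, hcard, ← mul_pow,
        mul_inv_cancel₀ hc0, one_pow]
    rw [h1, h2, sub_self]
  by_cases h1 : 1 ≤ suppSize ρ
  · have hp0 := hvanish nn ρ hu hi h1 hsupp
    have hlin : repFourier (fun x => (p x : ℂ) - ((Fintype.card H : ℂ))⁻¹ ^ m) (tensorRep ρ)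
        = repFourier (fun x => (p x : ℂ)) (tensorRep ρ)
          - repFourier (fun _ => ((Fintype.card H : ℂ))⁻¹ ^ m) (tensorRep ρ) := by
      simp only [repFourier, sub_smul, Finset.sum_sub_distrib, smul_sub]
    rw [hlin, hp0, zero_sub, neg_eq_zero]
    obtain ⟨t0, ht0⟩ : ∃ t, ∃ y, ρ t y ≠ 1 := by
      unfold suppSize at h1
      obtain ⟨t0, ht0⟩ := Finset.card_pos.mp h1
      simp only [Finset.mem_filter] at ht0
      exact ⟨t0, ht0.2⟩
    have hsum0 : ∑ y, ρ t0 y = 0 := sum_rep_eq_zero (hu t0) (hi t0) ht0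
    ext a b
    rw [repFourier_entry]
    have h3 : ∑ x : Fin m → H, ((Fintype.card H : ℂ))⁻¹ ^ m
        * (starRingEnd ℂ) (∏ t, ρ t (x t) (a t) (b t)) = 0 := by
      rw [← Finset.mul_sum]
      have h4 : ∑ x : Fin m → H, (starRingEnd ℂ) (∏ t, ρ t (x t) (a t) (b t))
          = ∏ t, ∑ y, (starRingEnd ℂ) (ρ t y (a t) (b t)) := by
        rw [← exch]
        exact Finset.sum_congr rfl fun x _ => map_prod _ _ _
      rw [h4]
      have h5 : ∑ y, (starRingEnd ℂ) (ρ t0 y (a t0) (b t0)) = 0 := by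
        rw [← map_sum]
        have h6 : ∑ y, ρ t0 y (a t0) (b t0) = (0 : ℂ) := by
          rw [← Matrix.sum_apply, hsum0]
          rfl
        rw [h6, map_zero]
      rw [Finset.prod_eq_zero (Finset.mem_univ t0) h5, mul_zero]
    rw [h3, mul_zero]
    rfl
  · have hall : ∀ t y, ρ t y = 1 := by
      intro t y
      by_contra hne
      refine h1 ?_
      unfold suppSize
      refine Finset.card_pos.mpr ⟨t, ?_⟩
      simp only [Finset.mem_filter]
      exact ⟨Finset.mem_univ _, ⟨y, hne⟩⟩
    ext a b
    rw [repFourier_entry]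
    have h2 : ∑ x : Fin m → H, ((p x : ℂ) - ((Fintype.card H : ℂ))⁻¹ ^ m)
        * (starRingEnd ℂ) (∏ t, ρ t (x t) (a t) (b t))
        = (∑ x : Fin m → H, ((p x : ℂ) - ((Fintype.card H : ℂ))⁻¹ ^ m))
          * (starRingEnd ℂ) (∏ t, (1 : Matrix (Fin (nn t)) (Fin (nn t)) ℂ) (a t) (b t)) := by
      rw [Finset.sum_mul]
      refine Finset.sum_congr rfl fun x _ => ?_
      congr 2
      exact Finset.prod_congr rfl fun t _ => by rw [hall]
    rw [h2, hgsum, zero_mul, mul_zero]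
    rfl

/-- The regular representation on `Fin (card H)`. -/
noncomputable def regRep (H : Type*) [Group H] [Fintype H] :
    H → Matrix (Fin (Fintype.card H)) (Fin (Fintype.card H)) ℂ :=
  fun y => Matrix.of fun a b =>
    if (Fintype.equivFin H).symm a = y * (Fintype.equivFin H).symm b then 1 else 0

lemma regRep_unitary {H : Type*} [Group H] [Fintype H] : IsUnitaryRep (regRep H) := by
  have hmul : ∀ x y : H, regRep H (x * y) = regRep H x * regRep H y := by
    intro x y
    ext a b
    rw [Matrix.mul_apply]
    rw [Finset.sum_eq_single ((Fintype.equivFin H) (y * (Fintype.equivFin H).symm b))]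
    · simp [regRep, mul_assoc]
    · intro c _ hc
      have hcc : ¬ ((Fintype.equivFin H).symm c = y * (Fintype.equivFin H).symm b) := by
        intro h
        apply hc
        have := congrArg (Fintype.equivFin H) h
        rwa [Equiv.apply_symm_apply] at this
      simp [regRep, hcc]
    · intro h
      exact absurd (Finset.mem_univ _) h
  have hone : regRep H 1 = 1 := by
    ext a b
    simp [regRep, Matrix.one_apply, one_mul, EmbeddingLike.apply_eq_iff_eq]
  have hstar : ∀ y, star (regRep H y) = regRep H y⁻¹ := by
    intro y
    ext a b
    simp only [Matrix.star_apply, regRep, Matrix.of_apply]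
    have hiff : ((Fintype.equivFin H).symm b = y * (Fintype.equivFin H).symm a)
        ↔ ((Fintype.equivFin H).symm a = y⁻¹ * (Fintype.equivFin H).symm b) := by
      rw [eq_inv_mul_iff_mul_eq, eq_comm]
    have hsi : ∀ (P : Prop) [Decidable P], star (if P then (1:ℂ) else 0)
        = if P then (1:ℂ) else 0 := by
      intro P _
      split <;> simp
    rw [hsi, if_congr hiff rfl rfl]
  refine ⟨fun y => ?_, hmul, hone⟩
  rw [Unitary.mem_iff, hstar]
  constructor
  · rw [← hmul, inv_mul_cancel, hone]
  · rw [← hmul, mul_inv_cancel, hone]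

end KU
namespace KU

set_option maxHeartbeats 1600000 in
theorem marginal_complex {H : Type*} [Group H] [Fintype H] {m k : ℕ}
    (p : (Fin m → H) → ℝ) (hp1 : ∑ x, p x = 1)
    (hvanish : ∀ (n : Fin m → ℕ) (ρ : ∀ t, H → Matrix (Fin (n t)) (Fin (n t)) ℂ),
      (∀ t, IsUnitaryRep (ρ t)) → (∀ t, IsIrredRep (ρ t)) →
      1 ≤ suppSize ρ → suppSize ρ ≤ k →
      repFourier (fun x => (p x : ℂ)) (tensorRep ρ) = 0)
    (S : Fin k → Fin m) (hS : Function.Injective S) (z : Fin k → H) :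
    ((marginal p S z : ℝ) : ℂ) = ((Fintype.card H : ℂ))⁻¹ ^ k := by
  classical
  have hc0 : (Fintype.card H : ℂ) ≠ 0 := Nat.cast_ne_zero.mpr Fintype.card_ne_zero
  have hkm : k ≤ m := by
    have := Fintype.card_le_of_injective S hS
    simpa using this
  obtain ⟨J, d, σ, C, D, hσu, hσi, hlams⟩ :=
    decomp_rep (Fintype.card H) (Fin (Fintype.card H)) (by simp) (regRep H) regRep_unitary
  have hentry : ∀ (y : H) (a b : Fin (Fintype.card H)),
      (if (Fintype.equivFin H).symm a = y * (Fintype.equivFin H).symm b then (1:ℂ) else 0)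
        = ∑ t : (Σ j : Fin J, Fin (d j) × Fin (d j)),
            C t.1 a t.2.1 * σ t.1 y t.2.1 t.2.2 * D t.1 t.2.2 b := by
    intro y a b
    have h1 := congrFun (congrFun (hlams y) a) b
    have h2 : regRep H y a b = ∑ j, (C j * σ j y * D j) a b := by
      rw [h1, Matrix.sum_apply]
    calc (if (Fintype.equivFin H).symm a = y * (Fintype.equivFin H).symm b then (1:ℂ) else 0)
        = regRep H y a b := rfl
      _ = ∑ j, (C j * σ j y * D j) a b := h2
      _ = ∑ j, ∑ u, ∑ v, C j a u * σ j y u v * D j v b :=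
          Finset.sum_congr rfl fun j _ => triple_mul_apply _ _ _ _ _
      _ = ∑ t : (Σ j : Fin J, Fin (d j) × Fin (d j)),
            C t.1 a t.2.1 * σ t.1 y t.2.1 t.2.2 * D t.1 t.2.2 b := by
          rw [← Finset.univ_sigma_univ, Finset.sum_sigma]
          exact Finset.sum_congr rfl fun j _ => by rw [Fintype.sum_prod_type]
  have hind : ∀ (i : Fin k) (y : H), (if z i = y then (1:ℂ) else 0)
      = ∑ t : (Σ j : Fin J, Fin (d j) × Fin (d j)),
          C t.1 ((Fintype.equivFin H) (z i)) t.2.1 * σ t.1 y t.2.1 t.2.2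
            * D t.1 t.2.2 ((Fintype.equivFin H) 1) := by
    intro i y
    rw [← hentry y _ _]
    have hiff : ((Fintype.equivFin H).symm ((Fintype.equivFin H) (z i))
        = y * (Fintype.equivFin H).symm ((Fintype.equivFin H) 1)) ↔ (z i = y) := by
      simp
    rw [if_congr hiff rfl rfl]
  have hmargC : ((marginal p S z : ℝ) : ℂ)
      = ∑ x, (p x : ℂ) * ∏ i, (if z i = x (S i) then (1:ℂ) else 0) := by
    rw [show marginal p S z = ∑ x : Fin m → H, if ∀ i, x (S i) = z i then p x else 0 from rfl]
    rw [Complex.ofReal_sum]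
    refine Finset.sum_congr rfl fun x _ => ?_
    by_cases h : ∀ i, x (S i) = z i
    · rw [if_pos h]
      have hpr : ∏ i, (if z i = x (S i) then (1:ℂ) else 0) = 1 :=
        Finset.prod_eq_one fun i _ => by rw [if_pos (h i).symm]
      rw [hpr, mul_one]
    · rw [if_neg h, Complex.ofReal_zero]
      obtain ⟨i0, hi0⟩ := not_forall.mp h
      have hz : ∏ i, (if z i = x (S i) then (1:ℂ) else 0) = 0 :=
        Finset.prod_eq_zero (Finset.mem_univ i0) (if_neg fun hzz => hi0 hzz.symm)
      rw [hz, mul_zero]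
  have hprodred : ∀ (f : Fin m → ℂ), (∀ t, (¬ ∃ i, S i = t) → f t = 1)
      → ∏ t, f t = ∏ i, f (S i) := by
    intro f hf
    have h1 : ∏ i, f (S i) = ∏ t ∈ Finset.image S Finset.univ, f t :=
      (Finset.prod_image (fun a _ b _ h => hS h)).symm
    rw [h1]
    refine (Finset.prod_subset (Finset.subset_univ _) ?_).symm
    intro t _ ht
    refine hf t fun hex => ht ?_
    obtain ⟨i, hi⟩ := hex
    exact Finset.mem_image.mpr ⟨i, Finset.mem_univ _, hi⟩
  have hcount : ∑ x : Fin m → H, ∏ i, (if z i = x (S i) then (1:ℂ) else 0)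
      = (Fintype.card H : ℂ) ^ (m - k) := by
    set q : Fin m → H → ℂ := fun t y =>
      if h : ∃ i, S i = t then (if z h.choose = y then (1:ℂ) else 0) else 1 with hqdef
    have hqS : ∀ (i : Fin k) (y : H), q (S i) y = (if z i = y then (1:ℂ) else 0) := by
      intro i y
      have hex : ∃ i', S i' = S i := ⟨i, rfl⟩
      have hch : hex.choose = i := hS hex.choose_spec
      rw [hqdef]
      simp only
      rw [dif_pos hex, hch]
    have hqout : ∀ t, (¬ ∃ i, S i = t) → ∀ y, q t y = 1 := by
      intro t h y
      rw [hqdef]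
      simp only
      rw [dif_neg h]
    have hq1 : ∀ x : Fin m → H, ∏ t, q t (x t)
        = ∏ i, (if z i = x (S i) then (1:ℂ) else 0) := by
      intro x
      rw [hprodred (fun t => q t (x t)) (fun t h => hqout t h (x t))]
      exact Finset.prod_congr rfl fun i _ => hqS i (x (S i))
    have hqsum : ∀ t, ∑ y, q t y = if ∃ i, S i = t then (1:ℂ) else (Fintype.card H : ℂ) := by
      intro t
      by_cases h : ∃ i, S i = t
      · rw [if_pos h]
        have hqt : ∀ y, q t y = if z h.choose = y then (1:ℂ) else 0 := by
          intro y
          rw [hqdef]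
          simp only
          rw [dif_pos h]
        simp only [hqt]
        rw [Finset.sum_ite_eq]
        simp
      · rw [if_neg h]
        simp only [hqout t h]
        rw [Finset.sum_const, Finset.card_univ, nsmul_eq_mul, mul_one]
    calc ∑ x : Fin m → H, ∏ i, (if z i = x (S i) then (1:ℂ) else 0)
        = ∑ x : Fin m → H, ∏ t, q t (x t) := Finset.sum_congr rfl fun x _ => (hq1 x).symm
      _ = ∏ t, ∑ y, q t y := exch q
      _ = ∏ t, (if ∃ i, S i = t then (1:ℂ) else (Fintype.card H : ℂ)) :=
          Finset.prod_congr rfl fun t _ => hqsum t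
      _ = (Fintype.card H : ℂ) ^ (m - k) := by
          rw [Finset.prod_ite (fun _ => (1:ℂ)) (fun _ => (Fintype.card H : ℂ))]
          rw [Finset.prod_const_one, one_mul, Finset.prod_const]
          congr 1
          have h1 : Finset.univ.filter (fun t => ∃ i, S i = t)
              = Finset.image S Finset.univ := by
            ext t
            simp
          have h2 := Finset.card_filter_add_card_filter_not
            (s := (Finset.univ : Finset (Fin m))) (p := fun t => ∃ i, S i = t)
          rw [h1, Finset.card_image_of_injective _ hS] at h2
          simp only [Finset.card_univ, Fintype.card_fin] at h2
          omega
  have hcount2 : ∑ x : Fin m → H, ((Fintype.card H : ℂ))⁻¹ ^ m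
      * ∏ i, (if z i = x (S i) then (1:ℂ) else 0) = ((Fintype.card H : ℂ))⁻¹ ^ k := by
    rw [← Finset.mul_sum, hcount]
    have hmk : k + (m - k) = m := by omega
    calc ((Fintype.card H : ℂ))⁻¹ ^ m * (Fintype.card H : ℂ) ^ (m - k)
        = ((Fintype.card H : ℂ))⁻¹ ^ (k + (m - k)) * (Fintype.card H : ℂ) ^ (m - k) := by
          rw [hmk]
      _ = ((Fintype.card H : ℂ))⁻¹ ^ k
          * (((Fintype.card H : ℂ))⁻¹ ^ (m - k) * (Fintype.card H : ℂ) ^ (m - k)) := by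
          rw [pow_add, mul_assoc]
      _ = ((Fintype.card H : ℂ))⁻¹ ^ k := by
          rw [← mul_pow, inv_mul_cancel₀ hc0, one_pow, mul_one]
  have hstep1 : ∀ x : Fin m → H, ∏ i, (if z i = x (S i) then (1:ℂ) else 0)
      = ∑ cc : Fin k → (Σ j : Fin J, Fin (d j) × Fin (d j)),
          ∏ i, (C (cc i).1 ((Fintype.equivFin H) (z i)) (cc i).2.1
            * σ (cc i).1 (x (S i)) (cc i).2.1 (cc i).2.2
            * D (cc i).1 (cc i).2.2 ((Fintype.equivFin H) 1)) := by
    intro x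
    calc ∏ i, (if z i = x (S i) then (1:ℂ) else 0)
        = ∏ i, ∑ t : (Σ j : Fin J, Fin (d j) × Fin (d j)),
            C t.1 ((Fintype.equivFin H) (z i)) t.2.1 * σ t.1 (x (S i)) t.2.1 t.2.2
              * D t.1 t.2.2 ((Fintype.equivFin H) 1) :=
          Finset.prod_congr rfl fun i _ => hind i (x (S i))
      _ = _ := Fintype.prod_sum _
  have hzero : ∑ x : Fin m → H, ((p x : ℂ) - ((Fintype.card H : ℂ))⁻¹ ^ m)
      * ∏ i, (if z i = x (S i) then (1:ℂ) else 0) = 0 := by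
    have h1 : ∀ x : Fin m → H, ((p x : ℂ) - ((Fintype.card H : ℂ))⁻¹ ^ m)
        * ∏ i, (if z i = x (S i) then (1:ℂ) else 0)
        = ∑ cc : Fin k → (Σ j : Fin J, Fin (d j) × Fin (d j)),
            ((p x : ℂ) - ((Fintype.card H : ℂ))⁻¹ ^ m)
              * ∏ i, (C (cc i).1 ((Fintype.equivFin H) (z i)) (cc i).2.1
                * σ (cc i).1 (x (S i)) (cc i).2.1 (cc i).2.2
                * D (cc i).1 (cc i).2.2 ((Fintype.equivFin H) 1)) := by
      intro x
      rw [hstep1 x, Finset.mul_sum]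
    rw [Finset.sum_congr rfl fun x _ => h1 x, Finset.sum_comm]
    refine Finset.sum_eq_zero fun cc _ => ?_
    -- build the big tensor representation
    set τ : ∀ j, H → Matrix (Fin (d j)) (Fin (d j)) ℂ := fun j => conjRep (σ j) with hτdef
    set F : Fin m → (Σ n0 : ℕ, (H → Matrix (Fin n0) (Fin n0) ℂ) × (Fin n0 × Fin n0)) :=
      fun t => if h : ∃ i, S i = t
        then ⟨d ((cc h.choose).1),
          (τ ((cc h.choose).1), ((cc h.choose).2.1, (cc h.choose).2.2))⟩
        else ⟨1, (fun _ => 1, (0, 0))⟩ with hFdef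
    have hev : ∀ (s : Σ n0 : ℕ, (H → Matrix (Fin n0) (Fin n0) ℂ) × (Fin n0 × Fin n0))
        (n0 : ℕ) (σ0 : H → Matrix (Fin n0) (Fin n0) ℂ) (u0 v0 : Fin n0),
        s = ⟨n0, (σ0, (u0, v0))⟩ → ∀ y, s.2.1 y s.2.2.1 s.2.2.2 = σ0 y u0 v0 := by
      rintro s n0 σ0 u0 v0 rfl y
      rfl
    have htransP : ∀ (P : ∀ n0 : ℕ, (H → Matrix (Fin n0) (Fin n0) ℂ) → Prop)
        (s : Σ n0 : ℕ, (H → Matrix (Fin n0) (Fin n0) ℂ) × (Fin n0 × Fin n0))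
        (n0 : ℕ) (σ0 : H → Matrix (Fin n0) (Fin n0) ℂ) (u0 v0 : Fin n0),
        s = ⟨n0, (σ0, (u0, v0))⟩ → P n0 σ0 → P s.1 s.2.1 := by
      rintro P s n0 σ0 u0 v0 rfl h
      exact h
    have hFpos : ∀ t (h : ∃ i, S i = t), F t
        = ⟨d ((cc h.choose).1),
          (τ ((cc h.choose).1), ((cc h.choose).2.1, (cc h.choose).2.2))⟩ := by
      intro t h
      rw [hFdef]
      simp only
      rw [dif_pos h]
    have hFS : ∀ i : Fin k, F (S i)
        = ⟨d ((cc i).1), (τ ((cc i).1), ((cc i).2.1, (cc i).2.2))⟩ := by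
      intro i
      have hex : ∃ i', S i' = S i := ⟨i, rfl⟩
      have hch : hex.choose = i := hS hex.choose_spec
      rw [hFpos (S i) hex, hch]
    have hFout : ∀ t, (¬ ∃ i, S i = t) → F t = ⟨1, (fun _ => 1, (0, 0))⟩ := by
      intro t h
      rw [hFdef]
      simp only
      rw [dif_neg h]
    have hbu : ∀ t, IsUnitaryRep ((F t).2.1) := by
      intro t
      by_cases h : ∃ i, S i = t
      · exact htransP (fun _ r => IsUnitaryRep r) _ _ _ _ _ (hFpos t h)
          (conjRep_unitary (hσu _))
      · exact htransP (fun _ r => IsUnitaryRep r) _ _ _ _ _ (hFout t h) trivialRep_unitary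
    have hbi : ∀ t, IsIrredRep ((F t).2.1) := by
      intro t
      by_cases h : ∃ i, S i = t
      · exact htransP (fun _ r => IsIrredRep r) _ _ _ _ _ (hFpos t h)
          (conjRep_irred (hσi _))
      · exact htransP (fun _ r => IsIrredRep r) _ _ _ _ _ (hFout t h) trivialRep_irred
    have hbtriv : ∀ t, (¬ ∃ i, S i = t) → ∀ y, (F t).2.1 y = 1 := by
      intro t h
      exact htransP (fun _ r => ∀ y, r y = 1) _ _ _ _ _ (hFout t h) (fun y => rfl)
    have hsupp : suppSize (fun t => (F t).2.1) ≤ k := by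
      unfold suppSize
      refine le_trans (Finset.card_le_card (t := Finset.image S Finset.univ) fun t ht => ?_)
        (le_trans Finset.card_image_le (by simp))
      simp only [Finset.mem_filter] at ht
      by_contra hnot
      obtain ⟨y, hy⟩ := ht.2
      refine hy (hbtriv t ?_ y)
      rintro ⟨i, hi⟩
      exact hnot (Finset.mem_image.mpr ⟨i, Finset.mem_univ _, hi⟩)
    have hF0 := fourier_g_vanish p hp1 hvanish (fun t => (F t).1) (fun t => (F t).2.1)
      hbu hbi hsupp
    have hent := congrFun (congrFun hF0 (fun t => (F t).2.2.1)) (fun t => (F t).2.2.2)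
    rw [repFourier_entry] at hent
    simp only [Matrix.zero_apply] at hent
    have hent' : ∑ x : Fin m → H, ((p x : ℂ) - ((Fintype.card H : ℂ))⁻¹ ^ m)
        * (starRingEnd ℂ) (∏ t, (F t).2.1 (x t) ((F t).2.2.1) ((F t).2.2.2)) = 0 := by
      have hGne : (Fintype.card (Fin m → H) : ℂ) ≠ 0 :=
        Nat.cast_ne_zero.mpr Fintype.card_ne_zero
      rcases mul_eq_zero.mp hent with h | h
      · exact absurd h (inv_ne_zero hGne)
      · exact h
    have hpr : ∀ x : Fin m → H,
        ∏ i, σ ((cc i).1) (x (S i)) ((cc i).2.1) ((cc i).2.2)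
          = (starRingEnd ℂ) (∏ t, (F t).2.1 (x t) ((F t).2.2.1) ((F t).2.2.2)) := by
      intro x
      rw [map_prod]
      rw [hprodred (fun t => (starRingEnd ℂ) ((F t).2.1 (x t) ((F t).2.2.1) ((F t).2.2.2)))
        (fun t h => by
          show (starRingEnd ℂ) ((F t).2.1 (x t) ((F t).2.2.1) ((F t).2.2.2)) = 1
          rw [hev _ _ _ _ _ (hFout t h) (x t)]
          simp)]
      refine Finset.prod_congr rfl fun i _ => ?_
      rw [hev _ _ _ _ _ (hFS i) (x (S i))]
      rw [hτdef]
      simp [conjRep, Matrix.map_apply]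
    have hKL : ∀ x : Fin m → H,
        ∏ i, (C (cc i).1 ((Fintype.equivFin H) (z i)) (cc i).2.1
          * σ (cc i).1 (x (S i)) (cc i).2.1 (cc i).2.2
          * D (cc i).1 (cc i).2.2 ((Fintype.equivFin H) 1))
        = (∏ i, C (cc i).1 ((Fintype.equivFin H) (z i)) (cc i).2.1
            * D (cc i).1 (cc i).2.2 ((Fintype.equivFin H) 1))
          * ∏ i, σ ((cc i).1) (x (S i)) ((cc i).2.1) ((cc i).2.2) := by
      intro x
      rw [Finset.prod_mul_distrib, Finset.prod_mul_distrib, Finset.prod_mul_distrib]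
      ring
    have h2 : ∀ x : Fin m → H, ((p x : ℂ) - ((Fintype.card H : ℂ))⁻¹ ^ m)
        * ∏ i, (C (cc i).1 ((Fintype.equivFin H) (z i)) (cc i).2.1
          * σ (cc i).1 (x (S i)) (cc i).2.1 (cc i).2.2
          * D (cc i).1 (cc i).2.2 ((Fintype.equivFin H) 1))
        = (∏ i, C (cc i).1 ((Fintype.equivFin H) (z i)) (cc i).2.1
            * D (cc i).1 (cc i).2.2 ((Fintype.equivFin H) 1))
          * (((p x : ℂ) - ((Fintype.card H : ℂ))⁻¹ ^ m)
            * (starRingEnd ℂ) (∏ t, (F t).2.1 (x t) ((F t).2.2.1) ((F t).2.2.2))) := by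
      intro x
      rw [hKL x, ← hpr x]
      ring
    rw [Finset.sum_congr rfl fun x _ => h2 x, ← Finset.mul_sum, hent', mul_zero]
  have hsub : ∑ x : Fin m → H, ((p x : ℂ) - ((Fintype.card H : ℂ))⁻¹ ^ m)
      * ∏ i, (if z i = x (S i) then (1:ℂ) else 0)
      = (∑ x, (p x : ℂ) * ∏ i, (if z i = x (S i) then (1:ℂ) else 0))
        - ∑ x : Fin m → H, ((Fintype.card H : ℂ))⁻¹ ^ m
          * ∏ i, (if z i = x (S i) then (1:ℂ) else 0) := by
    rw [← Finset.sum_sub_distrib]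
    exact Finset.sum_congr rfl fun x _ => by ring
  rw [hmargC]
  rw [hsub, hcount2] at hzero
  exact sub_eq_zero.mp hzero

end KU

/-- If all Fourier coefficients of `p` at (tensor-product) irreducible representations
of `H^m` with `1 ≤ |ρ| ≤ k` non-trivial factors vanish, then `p` is `k`-uniform. -/
theorem k_uniform_of_fourier_vanish {H : Type*} [Group H] [Fintype H] {m k : ℕ}
    (p : (Fin m → H) → ℝ) (hp0 : ∀ x, 0 ≤ p x) (hp1 : ∑ x, p x = 1)
    (hvanish : ∀ (n : Fin m → ℕ) (ρ : ∀ t, H → Matrix (Fin (n t)) (Fin (n t)) ℂ),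
      (∀ t, IsUnitaryRep (ρ t)) → (∀ t, IsIrredRep (ρ t)) →
      1 ≤ suppSize ρ → suppSize ρ ≤ k →
      repFourier (fun x => (p x : ℂ)) (tensorRep ρ) = 0) :
    ∀ S : Fin k → Fin m, Function.Injective S →
      ∀ z : Fin k → H, marginal p S z = 1 / (Fintype.card H : ℝ) ^ k := by
  intro S hS z
  have h := KU.marginal_complex p hp1 hvanish S hS z
  have h2 : ((marginal p S z : ℝ) : ℂ) = (((1 : ℝ) / (Fintype.card H : ℝ) ^ k : ℝ) : ℂ) := by
    rw [h]
    push_cast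
    rw [one_div, inv_pow]
  exact_mod_cast h2
end

section
/- Define a distribution s on H^{2^k} as follows: pick u_i^0, u_i^1 uniformly and independently from a finite group H for i ∈ [k]; for x ∈ {0,1}^k the coordinate s(x) is the ordered product ∏_{i<k} u_i^{x_i}. Then s is 3-uniform: for any three distinct strings x, y, z ∈ {0,1}^k, the triple (s(x), s(y), s(z)) is uniform on H³. -/
open scoped BigOperators Classical

/-- The coordinate `s(x) = ∏_{i<k} u_i^{x_i}` (ordered product, increasing `i`) of the
distribution `s` on `H^{2^k}`, determined by the seed `u`. -/
def sProd {H : Type*} [Group H] {k : ℕ} (u : Fin k → Bool → H) (x : Fin k → Bool) : H :=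
  ((List.finRange k).map fun i => u i (x i)).prod

namespace ThreeUniformAux

/-- uncurried product -/
def pF {H : Type*} [Group H] {k : ℕ} (f : Fin k × Bool → H) (x : Fin k → Bool) : H :=
  ((List.finRange k).map fun l => f (l, x l)).prod

lemma mem_take_lt {k : ℕ} {j l : Fin k} (h : l ∈ (List.finRange k).take j.val) :
    l.val < j.val := by
  obtain ⟨m, hm, rfl⟩ := List.mem_iff_getElem.mp h
  have hm' : m < j.val := by
    simpa [Nat.lt_min] using hm
  simp [List.getElem_take, hm']

lemma mem_drop_gt {k : ℕ} {j l : Fin k} (h : l ∈ (List.finRange k).drop (j.val + 1)) :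
    j.val < l.val := by
  obtain ⟨m, hm, rfl⟩ := List.mem_iff_getElem.mp h
  simp [List.getElem_drop]
  omega

lemma finRange_split {k : ℕ} (j : Fin k) :
    List.finRange k =
      (List.finRange k).take j.val ++ j :: (List.finRange k).drop (j.val + 1) := by
  conv_lhs => rw [← List.take_append_drop j.val (List.finRange k)]
  congr 1
  rw [List.drop_eq_getElem_cons (by simpa using j.isLt)]
  congr 1
  simp

lemma pF_split {H : Type*} [Group H] {k : ℕ} (f : Fin k × Bool → H) (x : Fin k → Bool)
    (j : Fin k) :
    pF f x = (((List.finRange k).take j.val).map fun l => f (l, x l)).prod *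
      (f (j, x j) * (((List.finRange k).drop (j.val + 1)).map fun l => f (l, x l)).prod) := by
  rw [pF]
  conv_lhs => rw [finRange_split j]
  rw [List.map_append, List.prod_append, List.map_cons, List.prod_cons]

lemma solve_slot {H : Type*} [Group H] {k : ℕ} (f g : Fin k × Bool → H) (x : Fin k → Bool)
    (j : Fin k) (hoff : ∀ l : Fin k, l ≠ j → f (l, x l) = g (l, x l))
    (hp : pF f x = pF g x) : f (j, x j) = g (j, x j) := by
  have hne : ∀ l ∈ (List.finRange k).take j.val,
      f (l, x l) = g (l, x l) := fun l hl =>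
    hoff l (fun e => absurd (e ▸ mem_take_lt hl) (lt_irrefl _))
  have hne' : ∀ l ∈ (List.finRange k).drop (j.val + 1),
      f (l, x l) = g (l, x l) := fun l hl =>
    hoff l (fun e => absurd (e ▸ mem_drop_gt hl) (lt_irrefl _))
  rw [pF_split f x j, pF_split g x j,
    List.map_congr_left hne, List.map_congr_left hne'] at hp
  exact mul_right_cancel (mul_left_cancel hp)

lemma card_fixed3 {α : Type*} [Fintype α] [DecidableEq α] {H : Type*} [Fintype H]
    (s1 s2 s3 : α) (h12 : s1 ≠ s2) (h13 : s1 ≠ s3) (h23 : s2 ≠ s3) (a b c : H) :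
    (Finset.univ.filter fun v : α → H => v s1 = a ∧ v s2 = b ∧ v s3 = c).card =
    Fintype.card H ^ (Fintype.card α - 3) := by
  classical
  rw [← Fintype.card_subtype]
  have E : {v : α → H // v s1 = a ∧ v s2 = b ∧ v s3 = c} ≃
      ({x : α // x ≠ s1 ∧ x ≠ s2 ∧ x ≠ s3} → H) :=
    { toFun := fun v x => v.1 x.1
      invFun := fun g =>
        ⟨fun x => if h1 : x = s1 then a else if h2 : x = s2 then b
          else if h3 : x = s3 then c else g ⟨x, h1, h2, h3⟩, by
          refine ⟨by simp, ?_, ?_⟩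
          · simp [Ne.symm h12]
          · simp [Ne.symm h13, Ne.symm h23]⟩
      left_inv := by
        rintro ⟨v, hv1, hv2, hv3⟩
        apply Subtype.ext
        funext x
        by_cases e1 : x = s1
        · subst e1; simp [hv1]
        by_cases e2 : x = s2
        · subst e2; simp [Ne.symm h12, hv2]
        by_cases e3 : x = s3
        · subst e3; simp [Ne.symm h13, Ne.symm h23, hv3]
        simp [e1, e2, e3]
      right_inv := by
        intro g
        funext x
        obtain ⟨x, hx1, hx2, hx3⟩ := x
        simp [hx1, hx2, hx3] }
  rw [Fintype.card_congr E, Fintype.card_fun]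
  congr 1
  have : ∀ x : α, (x ≠ s1 ∧ x ≠ s2 ∧ x ≠ s3) ↔ x ∉ ({s1, s2, s3} : Finset α) := by
    intro x; simp [not_or]
  rw [Fintype.card_subtype]
  rw [Finset.filter_congr (fun x _ => this x), ← Finset.sdiff_eq_filter,
    Finset.card_sdiff_of_subset (Finset.subset_univ _), Finset.card_univ]
  congr 1
  rw [Finset.card_insert_of_notMem (by simp [h12, h13]),
    Finset.card_insert_of_notMem (by simp [h23]), Finset.card_singleton]

lemma card_curry {H : Type*} [Group H] [Fintype H] {k : ℕ} (p q w : Fin k → Bool) (a b c : H) :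
    (Finset.univ.filter fun u : Fin k → Bool → H =>
      sProd u p = a ∧ sProd u q = b ∧ sProd u w = c).card =
    (Finset.univ.filter fun f : Fin k × Bool → H =>
      pF f p = a ∧ pF f q = b ∧ pF f w = c).card := by
  classical
  apply Finset.card_bij (fun u _ => fun s : Fin k × Bool => u s.1 s.2)
  · intro u hu
    simp only [Finset.mem_filter, Finset.mem_univ, true_and] at hu ⊢
    exact hu
  · intro u1 _ u2 _ e
    funext i b
    exact congrFun e (i, b)
  · intro f hf
    refine ⟨fun i b => f (i, b), ?_, rfl⟩
    simp only [Finset.mem_filter, Finset.mem_univ, true_and] at hf ⊢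
    exact hf

lemma main {H : Type*} [Group H] [Fintype H] {k : ℕ} (p q w : Fin k → Bool) (i j : Fin k)
    (hpq : p j ≠ q j) (hpw : p i ≠ w i) (hqw : q i ≠ w i) (a b c : H) :
    (Finset.univ.filter fun u : Fin k → Bool → H =>
      sProd u p = a ∧ sProd u q = b ∧ sProd u w = c).card * Fintype.card H ^ 3 =
    Fintype.card H ^ (2 * k) := by
  classical
  set s1 : Fin k × Bool := (j, p j) with hs1
  set s2 : Fin k × Bool := (j, q j) with hs2
  set s3 : Fin k × Bool := (i, w i) with hs3
  have h12 : s1 ≠ s2 := by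
    simp only [hs1, hs2, ne_eq, Prod.mk.injEq, not_and]
    intro _; exact hpq
  have h13 : s1 ≠ s3 := by
    simp only [hs1, hs3, ne_eq, Prod.mk.injEq, not_and]
    rintro rfl; exact hpw
  have h23 : s2 ≠ s3 := by
    simp only [hs2, hs3, ne_eq, Prod.mk.injEq, not_and]
    rintro rfl; exact hqw
  -- step 1: uncurry
  have hc : (Finset.univ.filter fun u : Fin k → Bool → H =>
      sProd u p = a ∧ sProd u q = b ∧ sProd u w = c).card =
      (Finset.univ.filter fun f : Fin k × Bool → H =>
        pF f p = a ∧ pF f q = b ∧ pF f w = c).card :=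
    card_curry p q w a b c
  -- the bijection overwriting the three slots
  set Φ : (Fin k × Bool → H) → (Fin k × Bool → H) := fun f s =>
    if s = s1 then pF f p else if s = s2 then pF f q else if s = s3 then pF f w else f s
    with hΦ
  have hΦ1 : ∀ f, Φ f s1 = pF f p := by intro f; simp [hΦ]
  have hΦ2 : ∀ f, Φ f s2 = pF f q := by intro f; simp [hΦ, Ne.symm h12]
  have hΦ3 : ∀ f, Φ f s3 = pF f w := by intro f; simp [hΦ, Ne.symm h13, Ne.symm h23]
  have hinj : Function.Injective Φ := by
    intro f g h
    have hoff : ∀ s, s ≠ s1 → s ≠ s2 → s ≠ s3 → f s = g s := by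
      intro s n1 n2 n3
      have := congrFun h s
      simpa [hΦ, n1, n2, n3] using this
    have hv1 : pF f p = pF g p := by rw [← hΦ1 f, ← hΦ1 g, h]
    have hv2 : pF f q = pF g q := by rw [← hΦ2 f, ← hΦ2 g, h]
    have hv3 : pF f w = pF g w := by rw [← hΦ3 f, ← hΦ3 g, h]
    have step1 : f s1 = g s1 := by
      refine solve_slot f g p j ?_ hv1
      intro l hl
      refine hoff (l, p l) ?_ ?_ ?_
      · simp only [hs1, ne_eq, Prod.mk.injEq, not_and]; intro e; exact absurd e hl
      · simp only [hs2, ne_eq, Prod.mk.injEq, not_and]; intro e; exact absurd e hl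
      · simp only [hs3, ne_eq, Prod.mk.injEq, not_and]; rintro rfl; exact fun e => hpw e
    have step2 : f s2 = g s2 := by
      refine solve_slot f g q j ?_ hv2
      intro l hl
      refine hoff (l, q l) ?_ ?_ ?_
      · simp only [hs1, ne_eq, Prod.mk.injEq, not_and]; intro e; exact absurd e hl
      · simp only [hs2, ne_eq, Prod.mk.injEq, not_and]; intro e; exact absurd e hl
      · simp only [hs3, ne_eq, Prod.mk.injEq, not_and]; rintro rfl; exact fun e => hqw e
    have hall : ∀ s, s ≠ s3 → f s = g s := by
      intro s n3
      by_cases e1 : s = s1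
      · subst e1; exact step1
      by_cases e2 : s = s2
      · subst e2; exact step2
      exact hoff s e1 e2 n3
    have step3 : f s3 = g s3 := by
      refine solve_slot f g w i ?_ hv3
      intro l hl
      refine hall (l, w l) ?_
      simp only [hs3, ne_eq, Prod.mk.injEq, not_and]; intro e; exact absurd e hl
    funext s
    by_cases e3 : s = s3
    · subst e3; exact step3
    exact hall s e3
  have hbij : Function.Bijective Φ := Finite.injective_iff_bijective.mp hinj
  have himg : (Finset.univ.filter fun f : Fin k × Bool → H =>
      pF f p = a ∧ pF f q = b ∧ pF f w = c).image Φ =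
      Finset.univ.filter fun v : Fin k × Bool → H => v s1 = a ∧ v s2 = b ∧ v s3 = c := by
    ext v
    simp only [Finset.mem_image, Finset.mem_filter, Finset.mem_univ, true_and]
    constructor
    · rintro ⟨f, ⟨h1, h2, h3⟩, rfl⟩
      exact ⟨by rw [hΦ1, h1], by rw [hΦ2, h2], by rw [hΦ3, h3]⟩
    · rintro ⟨h1, h2, h3⟩
      obtain ⟨f, rfl⟩ := hbij.2 v
      exact ⟨f, ⟨by rw [← hΦ1 f, h1], by rw [← hΦ2 f, h2], by rw [← hΦ3 f, h3]⟩, rfl⟩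
  have hcard2 : (Finset.univ.filter fun f : Fin k × Bool → H =>
      pF f p = a ∧ pF f q = b ∧ pF f w = c).card =
      (Finset.univ.filter fun v : Fin k × Bool → H =>
        v s1 = a ∧ v s2 = b ∧ v s3 = c).card := by
    rw [← himg, Finset.card_image_of_injective _ hinj]
  have hαcard : Fintype.card (Fin k × Bool) = 2 * k := by
    simp [mul_comm]
  have h3le : 3 ≤ 2 * k := by
    have hsub : ({s1, s2, s3} : Finset (Fin k × Bool)).card = 3 := by
      rw [Finset.card_insert_of_notMem (by simp [h12, h13]),
        Finset.card_insert_of_notMem (by simp [h23]), Finset.card_singleton]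
    calc 3 = ({s1, s2, s3} : Finset (Fin k × Bool)).card := hsub.symm
      _ ≤ Fintype.card (Fin k × Bool) := Finset.card_le_univ _
      _ = 2 * k := hαcard
  rw [hc, hcard2, card_fixed3 s1 s2 s3 h12 h13 h23 a b c, hαcard, ← pow_add,
    Nat.sub_add_cancel h3le]

end ThreeUniformAux

/-- `s` is 3-uniform: for any three distinct strings `x y z ∈ {0,1}^k`, the triple
`(s(x), s(y), s(z))` is uniform over `H³` when the seed `u` is uniform. -/
theorem s_three_uniform {H : Type*} [Group H] [Fintype H] {k : ℕ}
    (x y z : Fin k → Bool) (hxy : x ≠ y) (hxz : x ≠ z) (hyz : y ≠ z) :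
    ∀ a b c : H,
      (Finset.univ.filter fun u : Fin k → Bool → H =>
        sProd u x = a ∧ sProd u y = b ∧ sProd u z = c).card * Fintype.card H ^ 3 =
      Fintype.card H ^ (2 * k) := by
  intro a b c
  obtain ⟨j, hj⟩ := Function.ne_iff.mp hxy
  by_cases hz : z j = x j
  · -- minority is y at index j; majority pair (x, z)
    obtain ⟨j', hj'⟩ := Function.ne_iff.mp hxz
    have h2 : x j ≠ y j := hj
    have h3 : z j ≠ y j := hz ▸ hj
    have := ThreeUniformAux.main x z y j j' hj' h2 h3 a c b
    rw [Finset.filter_congr (fun u _ => by tauto :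
      ∀ u ∈ (Finset.univ : Finset (Fin k → Bool → H)),
        (sProd u x = a ∧ sProd u y = b ∧ sProd u z = c) ↔
        (sProd u x = a ∧ sProd u z = c ∧ sProd u y = b))]
    exact this
  · -- z j = y j : minority is x at index j; majority pair (y, z)
    have hzy : z j = y j := by
      revert hj hz; cases hx : x j <;> cases hy : y j <;> cases hzz : z j <;> simp
    obtain ⟨j', hj'⟩ := Function.ne_iff.mp hyz
    have h2 : y j ≠ x j := Ne.symm hj
    have h3 : z j ≠ x j := hzy ▸ h2
    have := ThreeUniformAux.main y z x j j' hj' h2 h3 b c a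
    rw [Finset.filter_congr (fun u _ => by tauto :
      ∀ u ∈ (Finset.univ : Finset (Fin k → Bool → H)),
        (sProd u x = a ∧ sProd u y = b ∧ sProd u z = c) ↔
        (sProd u y = b ∧ sProd u z = c ∧ sProd u x = a))]
    exact this
end

section
/- The distribution s on H^{2^k} (k ≥ 2, |H| ≥ 2) defined by s(x) = ∏_{i<k} u_i^{x_i} for uniform independent u_i^0, u_i^1 ∈ H is not 4-uniform: there exist four distinct strings x,y,z,w ∈ {0,1}^k such that (s(x),s(y),s(z),s(w)) is not uniform on H⁴. -/
open scoped BigOperators Classical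

lemma sProd_split {H : Type*} [Group H] {m : ℕ} (u : Fin (m+2) → Bool → H)
    (v : Fin (m+2) → Bool) :
    sProd u v = u 0 (v 0) * (u 1 (v 1) *
      (((List.finRange m).map fun i => u i.succ.succ (v i.succ.succ)).prod)) := by
  simp [sProd, List.finRange_succ, List.map_map, Function.comp_def, Fin.succ_zero_eq_one]

/-- `s` is not 4-uniform: there are four distinct strings `x, y, z, w ∈ {0,1}^k` such that
`(s(x), s(y), s(z), s(w))` is not uniform over `H⁴`. -/
theorem s_not_four_uniform {H : Type*} [Group H] [Fintype H] {k : ℕ}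
    (hk : 2 ≤ k) (hH : 2 ≤ Fintype.card H) :
    ∃ x y z w : Fin k → Bool, x ≠ y ∧ x ≠ z ∧ x ≠ w ∧ y ≠ z ∧ y ≠ w ∧ z ≠ w ∧
      ∃ a b c e : H,
        (Finset.univ.filter fun u : Fin k → Bool → H =>
          sProd u x = a ∧ sProd u y = b ∧ sProd u z = c ∧ sProd u w = e).card *
            Fintype.card H ^ 4 ≠
          Fintype.card H ^ (2 * k) := by
  obtain ⟨m, rfl⟩ : ∃ m, k = m + 2 := ⟨k - 2, by omega⟩
  obtain ⟨e, he⟩ := Fintype.exists_ne_of_one_lt_card (by omega) (1 : H)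
  have h0 : ((0 : Fin (m+2)) : ℕ) = 0 := rfl
  have h1 : ((1 : Fin (m+2)) : ℕ) = 1 := rfl
  refine ⟨fun _ => false, fun i => decide ((i : ℕ) = 1), fun i => decide ((i : ℕ) = 0),
    fun i => decide ((i : ℕ) ≤ 1), ?_, ?_, ?_, ?_, ?_, ?_, 1, 1, 1, e, ?_⟩
  · exact fun h => by simpa using congrFun h ⟨1, by omega⟩
  · exact fun h => by simpa using congrFun h ⟨0, by omega⟩
  · exact fun h => by simpa using congrFun h ⟨0, by omega⟩
  · exact fun h => by simpa using congrFun h ⟨0, by omega⟩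
  · exact fun h => by simpa using congrFun h ⟨0, by omega⟩
  · exact fun h => by simpa using congrFun h ⟨1, by omega⟩
  · have hempty : (Finset.univ.filter fun u : Fin (m+2) → Bool → H =>
        sProd u (fun _ => false) = 1 ∧ sProd u (fun i => decide ((i : ℕ) = 1)) = 1 ∧
        sProd u (fun i => decide ((i : ℕ) = 0)) = 1 ∧
        sProd u (fun i => decide ((i : ℕ) ≤ 1)) = e) = ∅ := by
      rw [Finset.filter_eq_empty_iff]
      rintro u - ⟨hx, hy, hz, hw⟩
      rw [sProd_split] at hx hy hz hw
      simp only [h0, h1, Fin.val_succ] at hx hy hz hw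
      norm_num at hx hy hz hw
      set R := ((List.finRange m).map fun i => u i.succ.succ false).prod with hR
      -- hx : u 0 false * (u 1 false * R) = 1
      -- hz : u 0 true * (u 1 false * R) = 1
      have h02 : u 0 false = u 0 true := mul_right_cancel (hx.trans hz.symm)
      rw [← h02] at hw
      exact he (hw.symm.trans hy)
    rw [hempty]
    simp only [Finset.card_empty, Nat.zero_mul]
    have : 0 < Fintype.card H ^ (2 * (m + 2)) := Nat.pow_pos (by omega)
    omega
end
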